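/- arXiv:1603.05010 — 6 statements merged into one kernel-verified Lean document; each statement's English description precedes it below -/
import Mathlib

section
/- Let A be a nonzero antisymmetric tensor of order d ≥ 3 with n = d+1 (i.e., A ∈ ℝ^{(d+1)×⋯×(d+1)}). Then the rank of the first matricization A_(1) is at most d; explicitly, with α_k := A(1,…,k−1,k+1,…,d+1), the linear combination Σ_{k=1}^{d+1} (−1)^k α_k · (row k of A_(1)) equals zero. -/
def IsAntisym {n d : ℕ} (A : (Fin d → Fin n) → ℝ) : Prop :=
  ∀ (π : Equiv.Perm (Fin d)) (i : Fin d → Fin n),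
    A (i ∘ π) = ((Equiv.Perm.sign π : ℤ) : ℝ) * A i

open Equiv Finset Matrix

/-- Levi-Civita-style symbol via a determinant. -/
noncomputable def EE {n : ℕ} (f : Fin n → Fin n) : ℝ :=
  Matrix.det (Matrix.of fun a b => if f a = b then (1 : ℝ) else 0)

lemma EE_comp_perm {n : ℕ} (f : Fin n → Fin n) (π : Perm (Fin n)) :
    EE (f ∘ π) = ((Perm.sign π : ℤ) : ℝ) * EE f := by
  have h : (Matrix.of fun a b => if (f ∘ π) a = b then (1 : ℝ) else 0)
      = (Matrix.of fun a b => if f a = b then (1 : ℝ) else 0).submatrix π id := rfl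
  unfold EE
  rw [h, Matrix.det_permute]

lemma EE_zero_of_not_inj {n : ℕ} {f : Fin n → Fin n} (h : ¬ Function.Injective f) :
    EE f = 0 := by
  obtain ⟨a, b, hab, hne⟩ := Function.not_injective_iff.1 h
  exact Matrix.det_zero_of_row_eq hne (by funext c; simp [hab])

lemma EE_perm {n : ℕ} (σ : Perm (Fin n)) : EE ⇑σ = ((Perm.sign σ : ℤ) : ℝ) := by
  have h : (Matrix.of fun a b => if σ a = b then (1 : ℝ) else 0) = σ.permMatrix ℝ := by
    ext a b
    simp [PEquiv.toMatrix_apply, Equiv.toPEquiv, eq_comm]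
  unfold EE
  rw [h, Matrix.det_permutation]

lemma cons_succAbove_eq {n : ℕ} (m : Fin (n + 1)) :
    Fin.cons m (Fin.succAbove m) = ⇑(m.cycleRange.symm) := by
  funext x
  refine Fin.cases ?_ (fun j => ?_) x
  · simp
  · simp

lemma EE_cons_succAbove {n : ℕ} (m : Fin (n + 1)) :
    EE (Fin.cons m (Fin.succAbove m)) = (-1 : ℝ) ^ (m : ℕ) := by
  rw [cons_succAbove_eq, EE_perm]
  rw [Equiv.Perm.sign_symm, Fin.sign_cycleRange]
  norm_num

lemma antisym_zero {n d : ℕ} {A : (Fin d → Fin n) → ℝ} (hA : IsAntisym A)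
    {i : Fin d → Fin n} (h : ¬ Function.Injective i) : A i = 0 := by
  obtain ⟨a, b, hab, hne⟩ := Function.not_injective_iff.1 h
  have h1 := hA (Equiv.swap a b) i
  have h2 : i ∘ ⇑(Equiv.swap a b) = i := by
    funext x
    rcases eq_or_ne x a with rfl | hxa
    · simp [hab]
    rcases eq_or_ne x b with rfl | hxb
    · simp [hab]
    · simp [Equiv.swap_apply_of_ne_of_ne hxa hxb]
  rw [h2, Equiv.Perm.sign_swap hne] at h1
  norm_num at h1
  linarith

/-- Representation of an antisymmetric `(n-1)`-tensor in dimension `n`. -/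
lemma rep {d₀ : ℕ} (A : (Fin (d₀ + 1) → Fin (d₀ + 2)) → ℝ) (hA : IsAntisym A)
    (i : Fin (d₀ + 1) → Fin (d₀ + 2)) :
    A i = ∑ k : Fin (d₀ + 2),
      (-1 : ℝ) ^ (k : ℕ) * A (Fin.succAbove k) * EE (Fin.cons k i) := by
  by_cases hi : Function.Injective i
  · have hm : ∃ m : Fin (d₀ + 2), ∀ a, i a ≠ m := by
      by_contra h
      push_neg at h
      have hs : Function.Surjective i := fun m => h m
      have := Fintype.card_le_of_surjective i hs
      simp [Fintype.card_fin] at this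
    obtain ⟨m, hm⟩ := hm
    choose g hg using fun a => Fin.exists_succAbove_eq (hm a)
    have hginj : Function.Injective g := fun a b h => hi (by rw [← hg a, ← hg b, h])
    let π : Perm (Fin (d₀ + 1)) := Equiv.ofBijective g (Finite.injective_iff_bijective.1 hginj)
    have hiπ : i = (Fin.succAbove m) ∘ ⇑π := funext fun a => (hg a).symm
    have hzero : ∀ k, k ≠ m → EE (Fin.cons k i) = 0 := by
      intro k hk
      obtain ⟨z, hz⟩ := Fin.exists_succAbove_eq hk
      apply EE_zero_of_not_inj
      intro hinj
      have e1 : (Fin.cons k i : Fin (d₀ + 1 + 1) → Fin (d₀ + 2)) (Fin.succ (π.symm z)) = k := by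
        rw [Fin.cons_succ, hiπ]
        simp [hz]
      have e0 : (Fin.cons k i : Fin (d₀ + 1 + 1) → Fin (d₀ + 2)) 0 = k := rfl
      exact Fin.succ_ne_zero (π.symm z) (hinj (e1.trans e0.symm))
    have hmain : EE (Fin.cons m i) = ((Perm.sign π : ℤ) : ℝ) * (-1 : ℝ) ^ (m : ℕ) := by
      have hcomp : Fin.cons m i = (Fin.cons m (Fin.succAbove m))
          ∘ ⇑(Equiv.Perm.decomposeFin.symm (0, π)) := by
        funext x
        refine Fin.cases ?_ (fun y => ?_) x
        · simp
        · simp only [Function.comp_apply, Equiv.Perm.decomposeFin_symm_apply_succ]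
          simp [hiπ]
      rw [hcomp, EE_comp_perm, EE_cons_succAbove]
      have hsign : Perm.sign (Equiv.Perm.decomposeFin.symm ((0 : Fin (d₀ + 2)), π))
          = Perm.sign π := by
        simp
      rw [hsign]
    rw [Finset.sum_eq_single m]
    · have h11 : ((-1 : ℝ)) ^ ((m : ℕ)) * ((-1 : ℝ)) ^ ((m : ℕ)) = 1 := by
        rw [← pow_add]
        exact Even.neg_one_pow ⟨(m : ℕ), rfl⟩
      rw [hmain, hiπ, hA π (Fin.succAbove m)]
      linear_combination (-(((Perm.sign π : ℤ) : ℝ) * A (Fin.succAbove m))) * h11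
    · intro k _ hk
      rw [hzero k hk]; ring
    · intro h; exact absurd (Finset.mem_univ m) h
  · rw [antisym_zero hA hi]
    symm
    apply Finset.sum_eq_zero
    intro k _
    obtain ⟨a, b, hab, hne⟩ := Function.not_injective_iff.1 hi
    have hE : EE (Fin.cons k i) = 0 := by
      apply EE_zero_of_not_inj
      intro hinj
      have e : (Fin.cons k i : Fin (d₀ + 1 + 1) → Fin (d₀ + 2)) a.succ
          = (Fin.cons k i : Fin (d₀ + 1 + 1) → Fin (d₀ + 2)) b.succ := by
        simp [Fin.cons_succ, hab]
      exact hne (Fin.succ_injective _ (hinj e))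
    rw [hE]; ring

lemma EE_cons_cons_antisymm {d₀ : ℕ} (j : Fin d₀ → Fin (d₀ + 2)) (k m : Fin (d₀ + 2)) :
    EE (Fin.cons m (Fin.cons k j)) = - EE (Fin.cons k (Fin.cons m j)) := by
  have h01 : (0 : Fin (d₀ + 2)) ≠ 1 := by
    simp [Fin.ext_iff]
  have hcomp : Fin.cons m (Fin.cons k j)
      = (Fin.cons k (Fin.cons m j)) ∘ ⇑(Equiv.swap (0 : Fin (d₀ + 2)) 1) := by
    funext x
    refine Fin.cases ?_ (fun y => ?_) x
    · simp [Equiv.swap_apply_left]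
    · refine Fin.cases ?_ (fun z => ?_) y
      · have h1 : (Fin.succ (0 : Fin (d₀ + 1))) = (1 : Fin (d₀ + 2)) := by
          simp [Fin.ext_iff]
        simp [h1, Equiv.swap_apply_right]
      · have h0 : z.succ.succ ≠ (0 : Fin (d₀ + 2)) := Fin.succ_ne_zero _
        have h1 : z.succ.succ ≠ (1 : Fin (d₀ + 2)) := by
          intro h
          have h2 : z.succ.succ = Fin.succ 0 := by
            rw [h]; simp [Fin.ext_iff]
          exact (Fin.succ_ne_zero z) (Fin.succ_injective _ h2)
        simp [Equiv.swap_apply_of_ne_of_ne h0 h1]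
  rw [hcomp, EE_comp_perm, Equiv.Perm.sign_swap h01]
  norm_num

lemma rank_lt_aux {m n : Type*} [Fintype m] [Fintype n] (M : Matrix m n ℝ)
    (c : m → ℝ) (hc0 : c ≠ 0) (h : ∀ j, ∑ k, c k * M k j = 0) :
    M.rank + 1 ≤ Fintype.card m := by
  rw [← Matrix.rank_transpose]
  have hker : Mᵀ.mulVecLin c = 0 := by
    funext j
    simp only [Matrix.mulVecLin_apply, Matrix.mulVec, dotProduct,
      Matrix.transpose_apply, Pi.zero_apply]
    rw [← h j]
    apply Finset.sum_congr rfl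
    intro k _
    ring
  have hrn := LinearMap.finrank_range_add_finrank_ker (Mᵀ.mulVecLin)
  have hdom : Module.finrank ℝ (m → ℝ) = Fintype.card m := by
    simp
  rw [hdom] at hrn
  have hkpos : 1 ≤ Module.finrank ℝ (LinearMap.ker Mᵀ.mulVecLin) := by
    rcases Nat.eq_zero_or_pos (Module.finrank ℝ (LinearMap.ker Mᵀ.mulVecLin)) with hk | hk
    · exfalso
      have hbot : LinearMap.ker Mᵀ.mulVecLin = ⊥ := Submodule.finrank_eq_zero.1 hk
      have hmem : c ∈ LinearMap.ker Mᵀ.mulVecLin := hker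
      rw [hbot] at hmem
      exact hc0 (by simpa using hmem)
    · exact hk
  have hdef : Mᵀ.rank = Module.finrank ℝ (LinearMap.range Mᵀ.mulVecLin) := rfl
  omega

/-- For a nonzero antisymmetric tensor of order `d = d₀+1 ≥ 3` in dimension
`n = d+1 = d₀+2`, the rows of the first matricization satisfy the explicit
linear dependence `Σ_k (-1)^k α_k · (row k) = 0`, where `α_k` is the entry of
`A` at the increasing index tuple omitting `k`; consequently the first
matricization has rank at most `d`. -/
theorem antisym_rank_le_of_dim_eq_order_succ {d₀ : ℕ} (hd : 2 ≤ d₀)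
    (A : (Fin (d₀ + 1) → Fin (d₀ + 2)) → ℝ) (hA : IsAntisym A) (hA0 : A ≠ 0) :
    (∀ j : Fin d₀ → Fin (d₀ + 2),
      ∑ k : Fin (d₀ + 2), (-1 : ℝ) ^ (k : ℕ) * A (Fin.succAbove k) *
        A (Fin.cons k j) = 0) ∧
    (Matrix.rank (Matrix.of fun (k : Fin (d₀ + 2)) (j : Fin d₀ → Fin (d₀ + 2)) =>
      A (Fin.cons k j))) ≤ d₀ + 1 := by
  set c : Fin (d₀ + 2) → ℝ := fun k => (-1 : ℝ) ^ (k : ℕ) * A (Fin.succAbove k) with hc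
  have part1 : ∀ j : Fin d₀ → Fin (d₀ + 2),
      ∑ k : Fin (d₀ + 2), (-1 : ℝ) ^ (k : ℕ) * A (Fin.succAbove k) *
        A (Fin.cons k j) = 0 := by
    intro j
    have hrw : ∀ k : Fin (d₀ + 2),
        (-1 : ℝ) ^ (k : ℕ) * A (Fin.succAbove k) * A (Fin.cons k j)
        = ∑ m : Fin (d₀ + 2), c k * (c m * EE (Fin.cons m (Fin.cons k j))) := by
      intro k
      rw [show A (Fin.cons k j) = ∑ m : Fin (d₀ + 2),
        (-1 : ℝ) ^ (m : ℕ) * A (Fin.succAbove m) * EE (Fin.cons m (Fin.cons k j)) from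
        rep A hA _, Finset.mul_sum]
    rw [Finset.sum_congr rfl (fun k _ => hrw k)]
    set S := ∑ k : Fin (d₀ + 2), ∑ m : Fin (d₀ + 2),
      c k * (c m * EE (Fin.cons m (Fin.cons k j))) with hS
    have hneg : S = -S := by
      calc S = ∑ m : Fin (d₀ + 2), ∑ k : Fin (d₀ + 2),
          c k * (c m * EE (Fin.cons m (Fin.cons k j))) := Finset.sum_comm
      _ = ∑ m : Fin (d₀ + 2), ∑ k : Fin (d₀ + 2),
          -(c m * (c k * EE (Fin.cons k (Fin.cons m j)))) := by
          apply Finset.sum_congr rfl; intro m _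
          apply Finset.sum_congr rfl; intro k _
          rw [EE_cons_cons_antisymm]
          ring
      _ = -S := by rw [hS]; simp
    linarith
  refine ⟨part1, ?_⟩
  have hc0 : c ≠ 0 := by
    intro h
    apply hA0
    funext i
    rw [rep A hA i]
    have hck : ∀ k : Fin (d₀ + 2), (-1 : ℝ) ^ (k : ℕ) * A (Fin.succAbove k) = 0 := by
      intro k
      have := congrFun h k
      simpa [hc] using this
    simp only [Pi.zero_apply]
    apply Finset.sum_eq_zero
    intro k _
    rw [hck k, zero_mul]
  have key := rank_lt_aux
    (Matrix.of fun (k : Fin (d₀ + 2)) (j : Fin d₀ → Fin (d₀ + 2)) => A (Fin.cons k j))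
    c hc0 (by
      intro j
      have := part1 j
      simpa [hc] using this)
  simp only [Fintype.card_fin] at key
  omega
end

section
/- For every n ≥ d+2 ≥ 5 there exists an antisymmetric tensor A of order d with A ∈ ℝ^{n×⋯×n} whose first matricization A_(1) has rank n (i.e., full multilinear rank n is attained). -/
namespace FullRankAux

/-- offset pattern `0, 2, 3, ..., d+1`. -/
def ofs (d : ℕ) (p : Fin (d + 1)) : ℕ := if p = 0 then 0 else p.val + 1

lemma ofs_le (d : ℕ) (p : Fin (d + 1)) : ofs d p ≤ d + 1 := by
  unfold ofs; split
  · omega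
  · have := p.isLt; omega

lemma ofs_cases (d : ℕ) (p : Fin (d + 1)) :
    ofs d p = 0 ∨ (2 ≤ ofs d p ∧ ofs d p ≤ d + 1) := by
  unfold ofs; split
  · exact Or.inl rfl
  · right
    rename_i h
    have : p.val ≠ 0 := fun h0 => h (Fin.ext h0)
    have := p.isLt
    omega

lemma ofs_inj (d : ℕ) {p q : Fin (d + 1)} (h : ofs d p = ofs d q) : p = q := by
  unfold ofs at h
  split at h <;> split at h
  · rename_i h1 h2; rw [h1, h2]
  · omega
  · omega
  · exact Fin.ext (by omega)

variable {n : ℕ}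

/-- the tuple `(k, k+2, k+3, ..., k+d+1)` mod `n`. -/
def sig (d : ℕ) (k : Fin n) (p : Fin (d + 1)) : Fin n :=
  ⟨(k.val + ofs d p) % n, Nat.mod_lt _ k.pos⟩

lemma sig_val (d : ℕ) (k : Fin n) (p : Fin (d + 1)) :
    (sig d k p).val = (k.val + ofs d p) % n := rfl

lemma modsub {a m : ℕ} (hm : 0 < m) (h : a < 2 * m) :
    a % m = if a < m then a else a - m := by
  split
  · exact Nat.mod_eq_of_lt ‹_›
  · rw [Nat.mod_eq_sub_mod (by omega)]
    exact Nat.mod_eq_of_lt (by omega)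

lemma sig_inj (d : ℕ) (hn : d + 3 ≤ n) (k : Fin n) : Function.Injective (sig d k) := by
  intro p q h
  have hn0 : 0 < n := k.pos
  have hv := congrArg Fin.val h
  rw [sig_val, sig_val] at hv
  have hk := k.isLt
  have h1 := ofs_le d p
  have h2 := ofs_le d q
  have e1 := modsub hn0 (show k.val + ofs d p < 2 * n by omega)
  have e2 := modsub hn0 (show k.val + ofs d q < 2 * n by omega)
  rw [e1, e2] at hv
  apply ofs_inj d
  split_ifs at hv <;> omega

/-- The antisymmetric tensor: sum of signed permutation indicators over the
cyclic family of index tuples. -/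
noncomputable def theA (d n : ℕ) : (Fin (d + 1) → Fin n) → ℝ :=
  fun i => ∑ k : Fin n,
    Matrix.det (Matrix.of fun p q : Fin (d + 1) => if i p = sig d k q then (1 : ℝ) else 0)

lemma theA_antisym (d n : ℕ) : IsAntisym (theA d n) := by
  intro π i
  unfold theA
  rw [Finset.mul_sum]
  refine Finset.sum_congr rfl fun k _ => ?_
  have h := Matrix.det_permute π
    (Matrix.of fun p q : Fin (d + 1) => if i p = sig d k q then (1 : ℝ) else 0)
  have he : (Matrix.of fun p q : Fin (d + 1) => if (i ∘ π) p = sig d k q then (1 : ℝ) else 0)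
      = (Matrix.of fun p q : Fin (d + 1) =>
          if i p = sig d k q then (1 : ℝ) else 0).submatrix π id := rfl
  rw [he, h]

/-- Key combinatorial lemma: for `m ≠ k` there is an element of the tail of
`sig d k` avoiding all of `sig d m`. -/
lemma key (d : ℕ) (hd : 2 ≤ d) (hn : d + 3 ≤ n) (k m : Fin n) (hmk : m ≠ k) :
    ∃ r : ℕ, 2 ≤ r ∧ r ≤ d + 1 ∧
      ∀ o : ℕ, (o = 0 ∨ (2 ≤ o ∧ o ≤ d + 1)) → (k.val + r) % n ≠ (m.val + o) % n := by
  have hn0 : 0 < n := k.pos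
  have hk := k.isLt
  have hm := m.isLt
  have hne : m.val ≠ k.val := fun h => hmk (Fin.ext h)
  set s := (m.val + n - k.val) % n with hsdef
  have hs : s = if m.val + n - k.val < n then m.val + n - k.val else m.val + n - k.val - n :=
    hsdef.trans (modsub hn0 (by omega))
  have hs1 : 1 ≤ s ∧ s ≤ n - 1 := by split_ifs at hs <;> omega
  set r : ℕ := (if s ≤ d then s + 1 else if s ≤ n - d - 1 then 2 else s + d + 2 - n) with hrdef
  have hrb : 2 ≤ r ∧ r ≤ d + 1 := by
    rw [hrdef]; split_ifs <;> omega
  refine ⟨r, hrb.1, hrb.2, ?_⟩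
  intro o ho
  have e1 := modsub hn0 (show k.val + r < 2 * n by omega)
  have e2 := modsub hn0 (show m.val + o < 2 * n by omega)
  rw [e1, e2]
  split_ifs at hs hrdef ⊢ <;> omega

/-- the tail columns of `sig d k`. -/
def colj (d : ℕ) (k : Fin n) : Fin d → Fin n := fun q => sig d k q.succ

lemma cons_colj (d : ℕ) (k : Fin n) : Fin.cons k (colj d k) = sig d k := by
  funext p
  refine Fin.cases ?_ (fun q => ?_) p
  · rw [Fin.cons_zero]
    apply Fin.ext
    rw [sig_val]
    simp [ofs, Nat.mod_eq_of_lt k.isLt]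
  · rw [Fin.cons_succ]
    rfl

lemma ofs_succ_eq (d : ℕ) {r : ℕ} (hr2 : 2 ≤ r) (hrd : r ≤ d + 1) :
    ofs d (Fin.succ (⟨r - 2, by omega⟩ : Fin d)) = r := by
  unfold ofs
  rw [if_neg (Fin.succ_ne_zero _)]
  simp only [Fin.val_succ]
  omega

lemma entry (d : ℕ) (hd : 2 ≤ d) (hn : d + 3 ≤ n) (k k' : Fin n) :
    theA d n (Fin.cons k' (colj d k)) = if k' = k then 1 else 0 := by
  unfold theA
  split_ifs with hk'
  · subst hk'
    rw [cons_colj]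
    rw [Finset.sum_eq_single k']
    · have hone : (Matrix.of fun p q : Fin (d + 1) =>
          if sig d k' p = sig d k' q then (1 : ℝ) else 0) = 1 := by
        ext p q
        rw [Matrix.of_apply, Matrix.one_apply]
        congr 1
        simp [(sig_inj d hn k').eq_iff]
      rw [hone, Matrix.det_one]
    · intro m _ hm
      obtain ⟨r, hr2, hrd, hr⟩ := key d hd hn k' m hm
      apply Matrix.det_eq_zero_of_row_eq_zero (Fin.succ (⟨r - 2, by omega⟩ : Fin d))
      intro q
      rw [Matrix.of_apply, if_neg]
      intro hcon
      have hv := congrArg Fin.val hcon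
      rw [sig_val, sig_val, ofs_succ_eq d hr2 hrd] at hv
      exact hr (ofs d q) (ofs_cases d q) hv
    · intro h; exact absurd (Finset.mem_univ k') h
  · apply Finset.sum_eq_zero
    intro m _
    by_cases hmem : ∃ q : Fin d, k' = colj d k q
    · obtain ⟨q, hq⟩ := hmem
      apply Matrix.det_zero_of_row_eq (Fin.succ_ne_zero q).symm
      funext q'
      simp only [Matrix.of_apply, Fin.cons_zero, Fin.cons_succ, hq]
    · push_neg at hmem
      by_cases hm : m = k
      · subst hm
        apply Matrix.det_eq_zero_of_row_eq_zero 0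
        intro q'
        rw [Matrix.of_apply, Fin.cons_zero, if_neg]
        refine Fin.cases ?_ (fun q => ?_) q'
        · intro h0
          apply hk'
          have : sig d m 0 = m := by
            apply Fin.ext
            rw [sig_val]
            simp [ofs, Nat.mod_eq_of_lt m.isLt]
          rw [this] at h0
          exact h0
        · exact hmem q
      · obtain ⟨r, hr2, hrd, hr⟩ := key d hd hn k m hm
        apply Matrix.det_eq_zero_of_row_eq_zero (Fin.succ (⟨r - 2, by omega⟩ : Fin d))
        intro q
        rw [Matrix.of_apply, Fin.cons_succ, if_neg]
        intro hcon
        have hv := congrArg Fin.val hcon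
        have : colj d k (⟨r - 2, by omega⟩ : Fin d) = sig d k (Fin.succ ⟨r - 2, by omega⟩) := rfl
        rw [this, sig_val, sig_val, ofs_succ_eq d hr2 hrd] at hv
        exact hr (ofs d q) (ofs_cases d q) hv

end FullRankAux

open FullRankAux in
/-- For every `n ≥ d + 2` with `d = d₀ + 1 ≥ 3`, there exists an antisymmetric
tensor of order `d` in dimension `n` whose first matricization has full rank `n`. -/
theorem exists_antisym_full_multilinear_rank {d₀ n : ℕ} (hd : 2 ≤ d₀)
    (hn : d₀ + 3 ≤ n) :
    ∃ A : (Fin (d₀ + 1) → Fin n) → ℝ, IsAntisym A ∧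
      (Matrix.rank (Matrix.of fun (k : Fin n) (j : Fin d₀ → Fin n) =>
        A (Fin.cons k j))) = n := by
  classical
  refine ⟨theA d₀ n, theA_antisym d₀ n, ?_⟩
  set M : Matrix (Fin n) (Fin d₀ → Fin n) ℝ :=
    Matrix.of fun (k : Fin n) (j : Fin d₀ → Fin n) => theA d₀ n (Fin.cons k j) with hM
  have hcol : ∀ k : Fin n, M.mulVecLin (Pi.single (colj d₀ k) 1) = Pi.single k 1 := by
    intro k
    funext i
    rw [Matrix.mulVecLin_apply, Matrix.mulVec_single]
    show M i (colj d₀ k) * 1 = _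
    rw [mul_one]
    show theA d₀ n (Fin.cons i (colj d₀ k)) = _
    rw [entry d₀ hd hn k i, Pi.single_apply]
  have hsurj : Function.Surjective M.mulVecLin := by
    intro x
    refine ⟨∑ k : Fin n, x k • (Pi.single (colj d₀ k) 1 : (Fin d₀ → Fin n) → ℝ), ?_⟩
    rw [map_sum]
    have : ∀ k : Fin n, M.mulVecLin (x k • (Pi.single (colj d₀ k) 1 : (Fin d₀ → Fin n) → ℝ)) = Pi.single k (x k) := by
      intro k
      rw [map_smul, hcol k]
      funext j
      simp [Pi.single_apply]
    rw [Finset.sum_congr rfl fun k _ => this k]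
    funext j
    simp [Pi.single_apply]
  rw [Matrix.rank, LinearMap.range_eq_top.mpr hsurj]
  rw [finrank_top, Module.finrank_pi, Fintype.card_fin]
end

section
/- Let A ∈ ℝ^{n×⋯×n} be antisymmetric of order d, let v_1,…,v_d be unit vectors, and write [v_1,…,v_d] = [u_1,…,u_d]R with R upper triangular and u_1,…,u_d orthonormal (QR decomposition). Then A ×_1 v_1ᵀ ⋯ ×_d v_dᵀ = r_{11}⋯r_{dd} · (A ×_1 u_1ᵀ ⋯ ×_d u_dᵀ). In particular, since |r_{μμ}| ≤ 1, |A ×_1 v_1ᵀ ⋯ ×_d v_dᵀ| ≤ |A ×_1 u_1ᵀ ⋯ ×_d u_dᵀ|. -/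
def contr {n d : ℕ} (A : (Fin d → Fin n) → ℝ) (v : Fin d → Fin n → ℝ) : ℝ :=
  ∑ i : Fin d → Fin n, A i * ∏ m : Fin d, v m (i m)

lemma contr_perm {n d : ℕ} (A : (Fin d → Fin n) → ℝ) (hA : IsAntisym A)
    (u : Fin d → Fin n → ℝ) (σ : Equiv.Perm (Fin d)) :
    contr A (fun m => u (σ m)) = ((Equiv.Perm.sign σ : ℤ) : ℝ) * contr A u := by
  unfold contr
  rw [Finset.mul_sum]
  refine Fintype.sum_equiv (σ.arrowCongr (Equiv.refl (Fin n)))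
    (fun i => A i * ∏ m : Fin d, u (σ m) (i m))
    (fun j => ((Equiv.Perm.sign σ : ℤ) : ℝ) * (A j * ∏ m : Fin d, u m (j m))) ?_
  intro i
  show A i * (∏ m : Fin d, u (σ m) (i m)) =
    ((Equiv.Perm.sign σ : ℤ) : ℝ) * (A (i ∘ ⇑σ.symm) * ∏ m : Fin d, u m (i (σ.symm m)))
  have h2 : (∏ m : Fin d, u m (i (σ.symm m))) = ∏ m : Fin d, u (σ m) (i m) :=
    (Fintype.prod_equiv σ (fun m => u (σ m) (i m)) (fun m => u m (i (σ.symm m)))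
      (fun m => by simp)).symm
  rw [hA σ.symm i, h2, Equiv.Perm.sign_symm]
  rcases Int.units_eq_one_or (Equiv.Perm.sign σ) with h | h <;> rw [h] <;> push_cast <;> ring

lemma contr_repeat {n d : ℕ} (A : (Fin d → Fin n) → ℝ) (hA : IsAntisym A)
    (w : Fin d → Fin n → ℝ) (a b : Fin d) (hab : a ≠ b) (hw : w a = w b) :
    contr A w = 0 := by
  have hww : ∀ m, w (Equiv.swap a b m) = w m := by
    intro m
    rcases eq_or_ne m a with rfl | hma
    · rw [Equiv.swap_apply_left]; exact hw.symm
    rcases eq_or_ne m b with rfl | hmb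
    · rw [Equiv.swap_apply_right]; exact hw
    · rw [Equiv.swap_apply_of_ne_of_ne hma hmb]
  have key : contr A w = - contr A w := by
    unfold contr
    rw [← Finset.sum_neg_distrib]
    refine Fintype.sum_equiv ((Equiv.swap a b).arrowCongr (Equiv.refl (Fin n)))
      (fun i => A i * ∏ m : Fin d, w m (i m))
      (fun j => -(A j * ∏ m : Fin d, w m (j m))) ?_
    intro i
    show A i * (∏ m : Fin d, w m (i m)) =
      -(A (i ∘ ⇑(Equiv.swap a b)) * ∏ m : Fin d, w m (i (Equiv.swap a b m)))
    have h1 : A (i ∘ ⇑(Equiv.swap a b)) = -A i := by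
      have := hA (Equiv.swap a b) i
      rw [Equiv.Perm.sign_swap hab] at this
      simpa using this
    have h2 : (∏ m : Fin d, w m (i (Equiv.swap a b m))) = ∏ m : Fin d, w m (i m) := by
      refine Fintype.prod_equiv (Equiv.swap a b)
        (fun m => w m (i (Equiv.swap a b m))) (fun m => w m (i m)) (fun m => ?_)
      show w m (i (Equiv.swap a b m)) = w (Equiv.swap a b m) (i (Equiv.swap a b m))
      rw [hww]
    rw [h1, h2]
    ring
  linarith

/-- If `[v₁,…,v_d] = [u₁,…,u_d] R` is a QR decomposition of unit vectors
`v_μ`, with `u₁,…,u_d` orthonormal and `R` upper triangular, then the full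
contraction satisfies
`A ×₁ v₁ᵀ ⋯ ×_d v_dᵀ = r₁₁ ⋯ r_dd · (A ×₁ u₁ᵀ ⋯ ×_d u_dᵀ)`, and in
particular `|A ×₁ v₁ᵀ ⋯ ×_d v_dᵀ| ≤ |A ×₁ u₁ᵀ ⋯ ×_d u_dᵀ|`. -/
theorem antisym_contr_qr {n d : ℕ}
    (A : (Fin d → Fin n) → ℝ) (hA : IsAntisym A)
    (v u : Fin d → Fin n → ℝ) (R : Matrix (Fin d) (Fin d) ℝ)
    (hv : ∀ m, ∑ x : Fin n, v m x ^ 2 = 1)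
    (hu : ∀ p q : Fin d, ∑ x : Fin n, u p x * u q x = if p = q then 1 else 0)
    (hR : ∀ p q : Fin d, q < p → R p q = 0)
    (hvu : ∀ m x, v m x = ∑ p : Fin d, R p m * u p x) :
    contr A v = (∏ m : Fin d, R m m) * contr A u ∧
    |contr A v| ≤ |contr A u| := by
  classical
  have expand : contr A v =
      ∑ f : Fin d → Fin d, (∏ m : Fin d, R (f m) m) * contr A (fun m => u (f m)) := by
    unfold contr
    have step : ∀ i : Fin d → Fin n,
        A i * ∏ m : Fin d, v m (i m) =
        ∑ f : Fin d → Fin d, A i * ∏ m : Fin d, (R (f m) m * u (f m) (i m)) := by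
      intro i
      rw [← Finset.mul_sum]
      congr 1
      have h1 : ∀ m : Fin d, v m (i m) = ∑ p : Fin d, R p m * u p (i m) :=
        fun m => hvu m (i m)
      rw [Finset.prod_congr rfl (fun m _ => h1 m), Finset.prod_univ_sum]
      refine Finset.sum_congr ?_ (fun f _ => rfl)
      simp
    rw [Finset.sum_congr rfl (fun i _ => step i), Finset.sum_comm]
    refine Finset.sum_congr rfl (fun f _ => ?_)
    rw [Finset.mul_sum]
    refine Finset.sum_congr rfl (fun i _ => ?_)
    rw [Finset.prod_mul_distrib]
    ring
  have main : contr A v = (∏ m : Fin d, R m m) * contr A u := by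
    rw [expand, Finset.sum_eq_single id]
    · simp
    · intro f _ hf
      by_cases hinj : Function.Injective f
      · -- injective, not id: some m < f m, so R (f m) m = 0
        have hS : (Finset.univ.filter (fun m => f m ≠ m)).Nonempty := by
          by_contra h
          rw [Finset.not_nonempty_iff_eq_empty, Finset.filter_eq_empty_iff] at h
          exact hf (funext fun m => not_not.mp (h (Finset.mem_univ m)))
        set m := (Finset.univ.filter (fun m => f m ≠ m)).min' hS with hm
        have hmem := (Finset.univ.filter (fun m => f m ≠ m)).min'_mem hS
        rw [Finset.mem_filter] at hmem
        have hfm : f m ≠ m := hmem.2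
        have hfix : ∀ k, k < m → f k = k := by
          intro k hk
          by_contra hfk
          have : m ≤ k := Finset.min'_le _ k (Finset.mem_filter.mpr ⟨Finset.mem_univ k, hfk⟩)
          exact absurd hk (not_lt.mpr this)
        have hlt : m < f m := by
          rcases lt_trichotomy (f m) m with h | h | h
          · exact absurd (hinj (hfix (f m) h)) hfm
          · exact absurd h hfm
          · exact h
        rw [Finset.prod_eq_zero (f := fun x => R (f x) x) (Finset.mem_univ m) (hR (f m) m hlt), zero_mul]
      · obtain ⟨a, b, hab, hfab⟩ : ∃ a b, f a = f b ∧ a ≠ b := by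
          simp only [Function.Injective, not_forall] at hinj
          obtain ⟨a, b, h1, h2⟩ := hinj
          exact ⟨a, b, h1, h2⟩
        rw [contr_repeat A hA _ a b hfab (by rw [hab]), mul_zero]
    · simp
  refine ⟨main, ?_⟩
  have hRle : ∀ m, |R m m| ≤ 1 := by
    intro m
    have h1 : (1 : ℝ) = ∑ p : Fin d, (R p m)^2 := by
      rw [← hv m]
      have hx : ∀ x, v m x ^ 2 = ∑ p : Fin d, ∑ q : Fin d, (R p m * R q m) * (u p x * u q x) := by
        intro x
        rw [hvu m x, sq, Finset.sum_mul_sum]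
        exact Finset.sum_congr rfl (fun p _ => Finset.sum_congr rfl (fun q _ => by ring))
      rw [Finset.sum_congr rfl (fun x _ => hx x), Finset.sum_comm]
      refine Finset.sum_congr rfl (fun p _ => ?_)
      rw [Finset.sum_comm]
      have hq : ∀ q, ∑ x : Fin n, (R p m * R q m) * (u p x * u q x)
          = (R p m * R q m) * if p = q then 1 else 0 := by
        intro q
        rw [← Finset.mul_sum, hu p q]
      rw [Finset.sum_congr rfl (fun q _ => hq q)]
      simp [sq]
    have h2 : (R m m)^2 ≤ 1 := by
      rw [h1]
      exact Finset.single_le_sum (f := fun p => (R p m)^2) (fun p _ => sq_nonneg _)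
        (Finset.mem_univ m)
    nlinarith [abs_nonneg (R m m), sq_abs (R m m)]
  rw [main, abs_mul]
  have hple : |∏ m : Fin d, R m m| ≤ 1 := by
    rw [Finset.abs_prod]
    calc ∏ m : Fin d, |R m m| ≤ ∏ m : Fin d, (1:ℝ) :=
          Finset.prod_le_prod (fun m _ => abs_nonneg _) (fun m _ => hRle m)
      _ = 1 := by simp
  nlinarith [abs_nonneg (contr A u)]
end

section
/- For an antisymmetric tensor A of order d, the maximum of |A ×_1 v_1ᵀ ⋯ ×_d v_dᵀ| over unit vectors v_1,…,v_d equals the maximum of |A ×_1 u_1ᵀ ⋯ ×_d u_dᵀ| over orthonormal families u_1,…,u_d (assuming d ≤ n so orthonormal families exist). -/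
lemma contr_comp_perm {n d : ℕ} {A : (Fin d → Fin n) → ℝ} (hA : IsAntisym A)
    (π : Equiv.Perm (Fin d)) (w : Fin d → Fin n → ℝ) :
    contr A (w ∘ ⇑π) = ((Equiv.Perm.sign π : ℤ) : ℝ) * contr A w := by
  classical
  let e : (Fin d → Fin n) ≃ (Fin d → Fin n) :=
    { toFun := fun j => j ∘ ⇑π
      invFun := fun j => j ∘ ⇑π.symm
      left_inv := fun j => by ext m; simp
      right_inv := fun j => by ext m; simp }
  have key : ∀ j : Fin d → Fin n,
      A (e j) * ∏ m, (w ∘ ⇑π) m ((e j) m)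
        = ((Equiv.Perm.sign π : ℤ) : ℝ) * (A j * ∏ m, w m (j m)) := by
    intro j
    have h1 : A (e j) = ((Equiv.Perm.sign π : ℤ) : ℝ) * A j := hA π j
    have h2 : ∏ m, w (π m) (j (π m)) = ∏ m, w m (j m) :=
      Equiv.prod_comp π (fun m => w m (j m))
    simp only [e, Equiv.coe_fn_mk, Function.comp_apply] at h1 ⊢
    rw [h1, h2]; ring
  calc contr A (w ∘ ⇑π) = ∑ j : Fin d → Fin n, A (e j) * ∏ m, (w ∘ ⇑π) m ((e j) m) :=
        (Equiv.sum_comp e (fun i => A i * ∏ m, (w ∘ ⇑π) m (i m))).symm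
    _ = ∑ j : Fin d → Fin n, ((Equiv.Perm.sign π : ℤ) : ℝ) * (A j * ∏ m, w m (j m)) := by
        exact Finset.sum_congr rfl fun j _ => key j
    _ = ((Equiv.Perm.sign π : ℤ) : ℝ) * contr A w := by
        rw [← Finset.mul_sum]; rfl

lemma contr_eq_zero_of_eq {n d : ℕ} {A : (Fin d → Fin n) → ℝ} (hA : IsAntisym A)
    {w : Fin d → Fin n → ℝ} {p q : Fin d} (hpq : p ≠ q) (hw : w p = w q) :
    contr A w = 0 := by
  have h1 : w ∘ ⇑(Equiv.swap p q) = w := by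
    funext m
    rcases eq_or_ne m p with rfl | hmp
    · simp [Equiv.swap_apply_left, hw.symm]
    rcases eq_or_ne m q with rfl | hmq
    · simp [Equiv.swap_apply_right, hw]
    · simp [Equiv.swap_apply_of_ne_of_ne hmp hmq]
  have h2 := contr_comp_perm hA (Equiv.swap p q) w
  rw [h1, Equiv.Perm.sign_swap hpq] at h2
  simp at h2
  linarith

open Matrix in
lemma contr_expand {n d : ℕ} {A : (Fin d → Fin n) → ℝ} (hA : IsAntisym A)
    (u : Fin d → Fin n → ℝ) (R : Matrix (Fin d) (Fin d) ℝ)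
    (v : Fin d → Fin n → ℝ) (hv : ∀ m i, v m i = ∑ k, R m k * u k i) :
    contr A v = Rᵀ.det * contr A u := by
  classical
  have step1 : contr A v
      = ∑ σ : Fin d → Fin d, (∏ m, R m (σ m)) * contr A (fun m => u (σ m)) := by
    unfold contr
    have hprod : ∀ i : Fin d → Fin n, ∏ m, v m (i m)
        = ∑ σ : Fin d → Fin d, ∏ m, (R m (σ m) * u (σ m) (i m)) := by
      intro i
      calc ∏ m, v m (i m) = ∏ m, ∑ k, R m k * u k (i m) := by
            exact Finset.prod_congr rfl fun m _ => hv m (i m)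
        _ = ∑ σ ∈ Fintype.piFinset (fun _ : Fin d => (Finset.univ : Finset (Fin d))),
              ∏ m, (R m (σ m) * u (σ m) (i m)) := by
            rw [Finset.prod_univ_sum]
        _ = ∑ σ : Fin d → Fin d, ∏ m, (R m (σ m) * u (σ m) (i m)) := by
            apply Finset.sum_congr _ (fun _ _ => rfl)
            ext σ; simp
    calc ∑ i : Fin d → Fin n, A i * ∏ m, v m (i m)
        = ∑ i : Fin d → Fin n, ∑ σ : Fin d → Fin d,
            A i * ∏ m, (R m (σ m) * u (σ m) (i m)) := by
          exact Finset.sum_congr rfl fun i _ => by rw [hprod i, Finset.mul_sum]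
      _ = ∑ σ : Fin d → Fin d, ∑ i : Fin d → Fin n,
            A i * ∏ m, (R m (σ m) * u (σ m) (i m)) := Finset.sum_comm
      _ = ∑ σ : Fin d → Fin d, (∏ m, R m (σ m)) * contr A (fun m => u (σ m)) := by
          apply Finset.sum_congr rfl
          intro σ _
          unfold contr
          rw [Finset.mul_sum]
          apply Finset.sum_congr rfl
          intro i _
          rw [Finset.prod_mul_distrib]; ring
  have hzero : ∀ σ : Fin d → Fin d, ¬ Function.Bijective σ →
      (∏ m, R m (σ m)) * contr A (fun m => u (σ m)) = 0 := by
    intro σ hσ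
    have hinj : ¬ Function.Injective σ := fun h => hσ (Finite.injective_iff_bijective.mp h)
    rw [Function.not_injective_iff] at hinj
    obtain ⟨p, q, hpq, hne⟩ := hinj
    rw [contr_eq_zero_of_eq hA hne (by simp [hpq]), mul_zero]
  have step2 : contr A v
      = ∑ σ ∈ Finset.univ.filter (fun σ : Fin d → Fin d => Function.Bijective σ),
          (∏ m, R m (σ m)) * contr A (fun m => u (σ m)) := by
    rw [step1]
    exact (Finset.sum_filter_of_ne (fun σ _ h => by
      by_contra hb; exact h (hzero σ hb))).symm
  have step3 : contr A v = ∑ π : Equiv.Perm (Fin d),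
      (∏ m, R m (π m)) * (((Equiv.Perm.sign π : ℤ) : ℝ) * contr A u) := by
    rw [step2]
    refine (Finset.sum_bij (fun (π : Equiv.Perm (Fin d)) _ => ⇑π) ?_ ?_ ?_ ?_).symm
    · intro π _; exact Finset.mem_filter.mpr ⟨Finset.mem_univ _, π.bijective⟩
    · intro a _ b _ h
      exact Equiv.coe_fn_injective h
    · intro σ hσ
      refine ⟨Equiv.ofBijective σ (Finset.mem_filter.mp hσ).2, Finset.mem_univ _, rfl⟩
    · intro π _
      rw [show contr A (fun m => u (π m)) = contr A (u ∘ ⇑π) from rfl,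
        contr_comp_perm hA π u]
  rw [step3, Matrix.det_apply, Finset.sum_mul]
  apply Finset.sum_congr rfl
  intro π _
  have : ∏ i, Rᵀ (π i) i = ∏ m, R m (π m) := by
    apply Finset.prod_congr rfl; intros; rfl
  rw [this]
  simp [Units.smul_def, zsmul_eq_mul]
  ring

open Matrix in
lemma abs_det_le_one_of_unit_rows {d : ℕ} (M : Matrix (Fin d) (Fin d) ℝ)
    (h : ∀ m, ∑ k, M m k ^ 2 = 1) : |M.det| ≤ 1 := by
  classical
  rcases Nat.eq_zero_or_pos d with hd | hd
  · subst hd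
    simp [Matrix.det_fin_zero]
  have key : |M.det| ^ 2 ≤ 1 := by
    set G := M * Mᵀ with hGdef
    have hMH : Mᴴ = Mᵀ := by
      ext i j; simp [Matrix.conjTranspose_apply]
    have hG : G.PosSemidef := by
      have := Matrix.posSemidef_self_mul_conjTranspose M
      rwa [hMH] at this
    have hHerm : G.IsHermitian := hG.1
    set lam := hHerm.eigenvalues with hlam
    have hlam_nonneg : ∀ i, 0 ≤ lam i := fun i => hG.eigenvalues_nonneg i
    have hdet : G.det = ∏ i, lam i := by
      simpa using hHerm.det_eq_prod_eigenvalues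
    have htrace : G.trace = ∑ i, lam i := by
      have h1 := hHerm.spectral_theorem
      have h2 : G.trace = (Matrix.diagonal (RCLike.ofReal ∘ lam) : Matrix (Fin d) (Fin d) ℝ).trace := by
        conv_lhs => rw [h1]
        rw [Unitary.conjStarAlgAut_apply, Matrix.trace_mul_cycle]
        rw [show (star (hHerm.eigenvectorUnitary : Matrix (Fin d) (Fin d) ℝ)) *
            (hHerm.eigenvectorUnitary : Matrix (Fin d) (Fin d) ℝ) = 1 from
          Matrix.mem_unitaryGroup_iff'.mp (hHerm.eigenvectorUnitary).2, one_mul]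
      rw [h2, Matrix.trace_diagonal]
      simp
    have htr_val : G.trace = (d : ℝ) := by
      rw [Matrix.trace]
      have : ∀ m, G.diag m = 1 := by
        intro m
        simp only [Matrix.diag_apply, hGdef, Matrix.mul_apply, Matrix.transpose_apply]
        calc ∑ k, M m k * M m k = ∑ k, M m k ^ 2 := by
              exact Finset.sum_congr rfl fun k _ => (sq (M m k)).symm
          _ = 1 := h m
      calc ∑ m, G m m = ∑ m : Fin d, (1:ℝ) := Finset.sum_congr rfl fun m _ => this m
        _ = (d : ℝ) := by simp
    -- AM-GM
    have hd' : (d : ℝ) ≠ 0 := Nat.cast_ne_zero.mpr hd.ne'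
    have hgm := Real.geom_mean_le_arith_mean_weighted Finset.univ
        (fun _ => (d : ℝ)⁻¹) lam
        (fun i _ => by positivity)
        (by simp [Finset.sum_const, Finset.card_univ]; field_simp)
        (fun i _ => hlam_nonneg i)
    have hsum : ∑ i, (d : ℝ)⁻¹ * lam i = 1 := by
      rw [← Finset.mul_sum, ← htrace, htr_val]
      field_simp
    rw [hsum] at hgm
    -- hgm : ∏ i, lam i ^ (d:ℝ)⁻¹ ≤ 1
    have hprod_le : ∏ i, lam i ≤ 1 := by
      have h1 : (∏ i, lam i ^ ((d : ℝ)⁻¹)) ^ (d : ℕ) ≤ 1 ^ (d : ℕ) := by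
        apply pow_le_pow_left₀ _ hgm
        exact Finset.prod_nonneg fun i _ => Real.rpow_nonneg (hlam_nonneg i) _
      rw [one_pow] at h1
      calc ∏ i, lam i = (∏ i, lam i ^ ((d : ℝ)⁻¹)) ^ (d : ℕ) := by
            rw [← Finset.prod_pow]
            apply Finset.prod_congr rfl
            intro i _
            rw [← Real.rpow_natCast (lam i ^ ((d:ℝ)⁻¹)) d, ← Real.rpow_mul (hlam_nonneg i)]
            rw [inv_mul_cancel₀ hd', Real.rpow_one]
        _ ≤ 1 := h1
    have hdet2 : M.det ^ 2 = G.det := by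
      rw [hGdef, Matrix.det_mul, Matrix.det_transpose, sq]
    rw [sq_abs, hdet2, hdet]
    exact hprod_le
  nlinarith [abs_nonneg M.det]

open Finset in
lemma gram_schmidt_step {n d : ℕ} (hdn : d ≤ n) (v : Fin d → Fin n → ℝ)
    (hv : ∀ m, ∑ i, v m i ^ 2 = 1) :
    ∃ (u : Fin d → Fin n → ℝ) (R : Matrix (Fin d) (Fin d) ℝ),
      (∀ p q : Fin d, ∑ i, u p i * u q i = if p = q then 1 else 0) ∧
      (∀ m i, v m i = ∑ k, R m k * u k i) ∧
      (∀ m, ∑ k, R m k ^ 2 = 1) := by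
  classical
  have hfr : Module.finrank ℝ (EuclideanSpace ℝ (Fin n)) = Fintype.card (Fin n) := by
    simp [finrank_euclideanSpace]
  set f : Fin n → EuclideanSpace ℝ (Fin n) :=
    fun j => if h : (j : ℕ) < d then (WithLp.toLp 2 (v ⟨j, h⟩)) else 0 with hf
  have hwf : WellFoundedLT (Fin n) := inferInstance
  have hlf : LocallyFiniteOrderBot (Fin n) := inferInstance
  set b : OrthonormalBasis (Fin n) ℝ (EuclideanSpace ℝ (Fin n)) :=
    @InnerProductSpace.gramSchmidtOrthonormalBasis ℝ (EuclideanSpace ℝ (Fin n)) inferInstance inferInstance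
      inferInstance (Fin n) inferInstance hlf hwf inferInstance inferInstance hfr f with hb
  set u : Fin d → Fin n → ℝ := fun k => (b (Fin.castLE hdn k) : Fin n → ℝ) with hu
  set R : Matrix (Fin d) (Fin d) ℝ :=
    Matrix.of fun m k => (inner ℝ (b (Fin.castLE hdn k)) (WithLp.toLp 2 (v m)) : ℝ) with hR
  -- scalar inner product formula
  have hinner : ∀ x y : EuclideanSpace ℝ (Fin n), (inner ℝ x y : ℝ) = ∑ i, x i * y i := by
    intro x y
    simp [PiLp.inner_apply, RCLike.inner_apply, starRingEnd_apply, mul_comm]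
  -- orthonormality of u in scalar form
  have huorth : ∀ p q : Fin d, ∑ i, u p i * u q i = if p = q then 1 else 0 := by
    intro p q
    have h1 := (orthonormal_iff_ite.mp b.orthonormal) (Fin.castLE hdn p) (Fin.castLE hdn q)
    rw [hinner] at h1
    rw [show (∑ i, u p i * u q i) = ∑ i, (b (Fin.castLE hdn p)) i * (b (Fin.castLE hdn q)) i from rfl]
    rw [h1]
    simp [Fin.castLE_inj]
  -- coefficients vanish above d
  have hvan : ∀ (m : Fin d) (j : Fin n), d ≤ (j : ℕ) →
      (inner ℝ (b j) (WithLp.toLp 2 (v m)) : ℝ) = 0 := by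
    intro m j hj
    have hm : ((Fin.castLE hdn m : Fin n) : ℕ) < (j : ℕ) := lt_of_lt_of_le m.2 hj
    have hfm : f (Fin.castLE hdn m) = (WithLp.toLp 2 (v m)) := by
      rw [hf]
      simp only
      rw [dif_pos (show ((Fin.castLE hdn m : Fin n) : ℕ) < d from m.2)]
      congr 1
    have := @InnerProductSpace.gramSchmidtOrthonormalBasis_inv_triangular ℝ (EuclideanSpace ℝ (Fin n))
      inferInstance inferInstance inferInstance (Fin n) inferInstance hlf hwf
      inferInstance inferInstance hfr f (Fin.castLE hdn m) j (Fin.lt_def.mpr hm)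
    rwa [hfm] at this
  -- v m in terms of u
  have hrepr : ∀ m, (WithLp.toLp 2 (v m)) = ∑ k : Fin d, R m k • (b (Fin.castLE hdn k)) := by
    intro m
    have h1 := b.sum_repr' (WithLp.toLp 2 (v m))
    -- restrict sum
    set s : Finset (Fin n) := Finset.univ.map (Fin.castLEEmb hdn) with hs
    have h2 : ∑ j : Fin n, (inner ℝ (b j) (WithLp.toLp 2 (v m)) : ℝ) • b j
        = ∑ j ∈ s, (inner ℝ (b j) (WithLp.toLp 2 (v m)) : ℝ) • b j := by
      refine (Finset.sum_subset (Finset.subset_univ s) ?_).symm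
      intro j _ hj
      have hjd : d ≤ (j : ℕ) := by
        by_contra hlt
        push_neg at hlt
        exact hj (by
          rw [hs, Finset.mem_map]
          exact ⟨⟨(j : ℕ), hlt⟩, Finset.mem_univ _, by
            simp [Fin.castLEEmb, Fin.castLE]⟩)
      rw [hvan m j hjd, zero_smul]
    rw [← h1, h2, hs, Finset.sum_map]
    rfl
  -- componentwise
  have hvcomp : ∀ m i, v m i = ∑ k, R m k * u k i := by
    intro m i
    have h1 := congrFun (congrArg WithLp.ofLp (hrepr m)) i
    rw [show (WithLp.toLp 2 (v m)) i = v m i from rfl] at h1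
    rw [h1]
    have : (∑ k : Fin d, R m k • (b (Fin.castLE hdn k))) i
        = ∑ k : Fin d, (R m k • (b (Fin.castLE hdn k))) i := by
      rw [WithLp.ofLp_sum]; exact Finset.sum_apply i Finset.univ _
    rw [this]
    exact Finset.sum_congr rfl fun k _ => rfl
  -- unit rows of R
  have hrow : ∀ m, ∑ k, R m k ^ 2 = 1 := by
    intro m
    calc ∑ k, R m k ^ 2
        = ∑ k, ∑ k', (R m k * R m k') * (if k = k' then (1:ℝ) else 0) := by
          apply Finset.sum_congr rfl
          intro k _
          rw [Finset.sum_eq_single k]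
          · simp [sq]
          · intro k' _ hk'; simp [Ne.symm hk']
          · intro habs; exact absurd (Finset.mem_univ k) habs
      _ = ∑ k, ∑ k', (R m k * R m k') * (∑ i, u k i * u k' i) := by
          apply Finset.sum_congr rfl; intro k _
          apply Finset.sum_congr rfl; intro k' _
          rw [huorth k k']
      _ = ∑ k, ∑ k', ∑ i, (R m k * u k i) * (R m k' * u k' i) := by
          apply Finset.sum_congr rfl; intro k _
          apply Finset.sum_congr rfl; intro k' _
          rw [Finset.mul_sum]
          apply Finset.sum_congr rfl; intro i _; ring
      _ = ∑ i, ∑ k, ∑ k', (R m k * u k i) * (R m k' * u k' i) := by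
          have e1 : ∀ k : Fin d, ∑ k' : Fin d, ∑ i : Fin n,
              (R m k * u k i) * (R m k' * u k' i)
              = ∑ i : Fin n, ∑ k' : Fin d, (R m k * u k i) * (R m k' * u k' i) :=
            fun k => Finset.sum_comm
          calc ∑ k, ∑ k', ∑ i, (R m k * u k i) * (R m k' * u k' i)
              = ∑ k, ∑ i, ∑ k', (R m k * u k i) * (R m k' * u k' i) :=
                Finset.sum_congr rfl fun k _ => e1 k
            _ = ∑ i, ∑ k, ∑ k', (R m k * u k i) * (R m k' * u k' i) :=
                Finset.sum_comm
      _ = ∑ i, v m i ^ 2 := by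
          apply Finset.sum_congr rfl; intro i _
          rw [hvcomp m i, sq, Finset.sum_mul_sum]
      _ = 1 := hv m
  exact ⟨u, R, huorth, hvcomp, hrow⟩

/-- For an antisymmetric tensor of order `d ≤ n`, the supremum of
`|A ×₁ v₁ᵀ ⋯ ×_d v_dᵀ|` over unit vectors equals the supremum over
orthonormal families. -/
theorem antisym_sup_unit_eq_sup_orthonormal {n d : ℕ} (hdn : d ≤ n)
    (A : (Fin d → Fin n) → ℝ) (hA : IsAntisym A) :
    sSup {x : ℝ | ∃ v : Fin d → Fin n → ℝ,
        (∀ m, ∑ i : Fin n, v m i ^ 2 = 1) ∧ x = |contr A v|} =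
    sSup {x : ℝ | ∃ u : Fin d → Fin n → ℝ,
        (∀ p q : Fin d, ∑ i : Fin n, u p i * u q i = if p = q then 1 else 0) ∧
        x = |contr A u|} := by
  classical
  set S1 := {x : ℝ | ∃ v : Fin d → Fin n → ℝ,
      (∀ m, ∑ i : Fin n, v m i ^ 2 = 1) ∧ x = |contr A v|} with hS1
  set S2 := {x : ℝ | ∃ u : Fin d → Fin n → ℝ,
      (∀ p q : Fin d, ∑ i : Fin n, u p i * u q i = if p = q then 1 else 0) ∧
      x = |contr A u|} with hS2
  have hsub : S2 ⊆ S1 := by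
    rintro x ⟨u, hu, rfl⟩
    refine ⟨u, fun m => ?_, rfl⟩
    have h1 := hu m m
    rw [if_pos rfl] at h1
    calc ∑ i, u m i ^ 2 = ∑ i, u m i * u m i :=
          Finset.sum_congr rfl fun i _ => sq (u m i)
      _ = 1 := h1
  have hbdd : BddAbove S1 := by
    refine ⟨∑ i : Fin d → Fin n, |A i|, ?_⟩
    rintro x ⟨v, hv, rfl⟩
    have habs1 : ∀ (m : Fin d) (i : Fin n), |v m i| ≤ 1 := by
      intro m i
      have h1 : v m i ^ 2 ≤ 1 := by
        rw [← hv m]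
        exact Finset.single_le_sum (f := fun j => v m j ^ 2)
          (fun j _ => sq_nonneg _) (Finset.mem_univ i)
      nlinarith [abs_nonneg (v m i), sq_abs (v m i)]
    calc |contr A v| ≤ ∑ i : Fin d → Fin n, |A i * ∏ m, v m (i m)| :=
          Finset.abs_sum_le_sum_abs _ _
      _ ≤ ∑ i : Fin d → Fin n, |A i| := by
          apply Finset.sum_le_sum
          intro i _
          rw [abs_mul]
          apply mul_le_of_le_one_right (abs_nonneg _)
          rw [Finset.abs_prod]
          exact Finset.prod_le_one (fun m _ => abs_nonneg _) (fun m _ => habs1 m (i m))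
  have hne2 : S2.Nonempty := by
    refine ⟨|contr A (fun k i => if i = Fin.castLE hdn k then 1 else 0)|,
      (fun k i => if i = Fin.castLE hdn k then (1:ℝ) else 0), ?_, rfl⟩
    intro p q
    simp only [ite_mul, one_mul, zero_mul]
    rw [Finset.sum_ite_eq' Finset.univ (Fin.castLE hdn p)
      (fun i => if i = Fin.castLE hdn q then (1:ℝ) else 0)]
    simp [Fin.castLE_inj]
  have hne1 : S1.Nonempty := hne2.mono hsub
  have hbdd2 : BddAbove S2 := hbdd.mono hsub
  apply le_antisymm
  · apply csSup_le hne1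
    rintro x ⟨v, hv, rfl⟩
    obtain ⟨u, R, huorth, hvcomp, hrow⟩ := gram_schmidt_step hdn v hv
    have hexp := contr_expand hA u R v hvcomp
    have hdet : |(R.transpose).det| ≤ 1 := by
      rw [Matrix.det_transpose]
      exact abs_det_le_one_of_unit_rows R hrow
    have hle : |contr A v| ≤ |contr A u| := by
      rw [hexp, abs_mul]
      exact mul_le_of_le_one_left (abs_nonneg _) hdet
    exact hle.trans (le_csSup hbdd2 ⟨u, huorth, rfl⟩)
  · exact csSup_le_csSup hbdd hne2 hsub
end

section
/- Let A ∈ ℝ^{n×⋯×n} be antisymmetric of order d and U ∈ ℝ^{n×d} have orthonormal columns u_1,…,u_d. Then ‖A ×_1 Uᵀ ×_2 Uᵀ ⋯ ×_d Uᵀ‖ = d! · |A ×_1 u_1ᵀ ⋯ ×_d u_dᵀ| · ‖antisymm(e_1⊗⋯⊗e_d)‖, and ‖antisymm(e_1⊗⋯⊗e_d)‖² = 1/d!, so ‖A ×_1 Uᵀ ⋯ ×_d Uᵀ‖² = d!·(A ×_1 u_1ᵀ ⋯ ×_d u_dᵀ)². -/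
/-- The antisymmetrizer of `e_1 ⊗ ⋯ ⊗ e_d ∈ ℝ^{d×⋯×d}`. -/
noncomputable def antisymmUnit (d : ℕ) : (Fin d → Fin d) → ℝ :=
  fun j => (1 / (Nat.factorial d : ℝ)) *
    ∑ π : Equiv.Perm (Fin d), ((Equiv.Perm.sign π : ℤ) : ℝ) *
      (if (j ∘ π) = (fun m => m) then 1 else 0)

lemma sign_sq {d : ℕ} (π : Equiv.Perm (Fin d)) :
    ((Equiv.Perm.sign π : ℤ) : ℝ) * ((Equiv.Perm.sign π : ℤ) : ℝ) = 1 := by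
  rcases Int.units_eq_one_or (Equiv.Perm.sign π) with h | h <;> rw [h] <;> norm_num

lemma antisymmUnit_perm {d : ℕ} (σ : Equiv.Perm (Fin d)) :
    antisymmUnit d ⇑σ = (1 / (Nat.factorial d : ℝ)) * ((Equiv.Perm.sign σ : ℤ) : ℝ) := by
  unfold antisymmUnit
  congr 1
  rw [Finset.sum_eq_single σ⁻¹]
  · have h : (⇑σ ∘ ⇑σ⁻¹) = fun m => m := by funext m; simp
    rw [if_pos h, mul_one]
    simp
  · intro π _ hπ
    have h : ¬ (⇑σ ∘ ⇑π = fun m => m) := by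
      intro h
      apply hπ
      ext m
      have h2 := congrFun h m
      simp only [Function.comp] at h2
      have := congrArg (⇑σ⁻¹) h2
      simp only [Equiv.Perm.inv_def, Equiv.symm_apply_apply] at this; exact congrArg Fin.val this
    rw [if_neg h, mul_zero]
  · intro h; simp at h

lemma antisymmUnit_not_bij {d : ℕ} (j : Fin d → Fin d) (hj : ¬ Function.Bijective j) :
    antisymmUnit d j = 0 := by
  unfold antisymmUnit
  rw [Finset.sum_eq_zero, mul_zero]
  intro π _
  have h : ¬ (j ∘ ⇑π = fun m => m) := by
    intro h
    apply hj
    rw [← Finite.surjective_iff_bijective]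
    intro m
    exact ⟨π m, congrFun h m⟩
  rw [if_neg h, mul_zero]

lemma S_reindex {n d : ℕ} (A : (Fin d → Fin n) → ℝ) (hA : IsAntisym A)
    (U : Matrix (Fin n) (Fin d) ℝ) (j : Fin d → Fin d) (π : Equiv.Perm (Fin d)) :
    (∑ i : Fin d → Fin n, A i * ∏ m : Fin d, U (i m) (j (π m))) =
      ((Equiv.Perm.sign π : ℤ) : ℝ) *
        ∑ i : Fin d → Fin n, A i * ∏ m : Fin d, U (i m) (j m) := by
  rw [Finset.mul_sum]
  apply Fintype.sum_equiv (π.arrowCongr (Equiv.refl (Fin n)))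
  intro i
  have hc : (π.arrowCongr (Equiv.refl (Fin n))) i = i ∘ ⇑π⁻¹ := by
    funext m; simp [Equiv.arrowCongr, Equiv.Perm.inv_def]
  have hp : (∏ m : Fin d, U (i m) (j (π m))) = ∏ m : Fin d, U (i (π⁻¹ m)) (j m) := by
    rw [← Equiv.prod_comp π (fun m => U (i (π⁻¹ m)) (j m))]
    simp
  have hAv : A (i ∘ ⇑π⁻¹) = ((Equiv.Perm.sign π : ℤ) : ℝ) * A i := by
    rw [hA π⁻¹ i]; simp
  rw [hc, hAv, hp]
  simp only [Function.comp_apply]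
  rw [← mul_assoc, ← mul_assoc, sign_sq, one_mul]

/-- For an antisymmetric tensor `A` and `U` with orthonormal columns
`u_1,…,u_d`, the Frobenius norm of the compressed tensor
`S = A ×₁ Uᵀ ⋯ ×_d Uᵀ` satisfies
`‖S‖ = d! · |A ×₁ u₁ᵀ ⋯ ×_d u_dᵀ| · ‖antisymm(e₁⊗⋯⊗e_d)‖`, where
`‖antisymm(e₁⊗⋯⊗e_d)‖² = 1/d!`, hence
`‖S‖² = d! · (A ×₁ u₁ᵀ ⋯ ×_d u_dᵀ)²`. -/
theorem antisym_compressed_norm {n d : ℕ}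
    (A : (Fin d → Fin n) → ℝ) (hA : IsAntisym A)
    (U : Matrix (Fin n) (Fin d) ℝ)
    (hU : ∀ p q : Fin d, ∑ x : Fin n, U x p * U x q = if p = q then 1 else 0)
    (S : (Fin d → Fin d) → ℝ)
    (hS : ∀ j, S j = ∑ i : Fin d → Fin n, A i * ∏ m : Fin d, U (i m) (j m)) :
    Real.sqrt (∑ j : Fin d → Fin d, S j ^ 2) =
      (Nat.factorial d : ℝ) *
        |∑ i : Fin d → Fin n, A i * ∏ m : Fin d, U (i m) m| *
        Real.sqrt (∑ j : Fin d → Fin d, antisymmUnit d j ^ 2) ∧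
    (∑ j : Fin d → Fin d, antisymmUnit d j ^ 2) = 1 / (Nat.factorial d : ℝ) ∧
    (∑ j : Fin d → Fin d, S j ^ 2) =
      (Nat.factorial d : ℝ) *
        (∑ i : Fin d → Fin n, A i * ∏ m : Fin d, U (i m) m) ^ 2 := by
  set c : ℝ := ∑ i : Fin d → Fin n, A i * ∏ m : Fin d, U (i m) m with hc
  have hfacpos : (0:ℝ) < (Nat.factorial d : ℝ) := by
    exact_mod_cast Nat.factorial_pos d
  have hfne : (Nat.factorial d : ℝ) ≠ 0 := ne_of_gt hfacpos
  have hSperm : ∀ σ : Equiv.Perm (Fin d), S ⇑σ = ((Equiv.Perm.sign σ : ℤ) : ℝ) * c := by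
    intro σ
    rw [hS, hc]
    simpa using S_reindex A hA U (fun m => m) σ
  have hSzero : ∀ j, ¬ Function.Bijective j → S j = 0 := by
    intro j hj
    have hinj : ¬ Function.Injective j := fun h => hj (Finite.injective_iff_bijective.mp h)
    rw [Function.not_injective_iff] at hinj
    obtain ⟨a, b, hab, hne⟩ := hinj
    have hswap : ∀ m, j (Equiv.swap a b m) = j m := by
      intro m
      rcases eq_or_ne m a with rfl | ha
      · rw [Equiv.swap_apply_left, hab]
      rcases eq_or_ne m b with rfl | hb
      · rw [Equiv.swap_apply_right, hab]
      rw [Equiv.swap_apply_of_ne_of_ne ha hb]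
    have h1 := S_reindex A hA U j (Equiv.swap a b)
    have h2 : (∑ i : Fin d → Fin n, A i * ∏ m : Fin d, U (i m) (j (Equiv.swap a b m))) = S j := by
      rw [hS]
      refine Finset.sum_congr rfl fun i _ => ?_
      congr 1
      exact Finset.prod_congr rfl fun m _ => by rw [hswap m]
    rw [h2, ← hS, Equiv.Perm.sign_swap hne] at h1
    push_cast at h1
    linarith
  have hSval : ∀ j, S j = (Nat.factorial d : ℝ) * c * antisymmUnit d j := by
    intro j
    by_cases hb : Function.Bijective j
    · have hco : ⇑(Equiv.ofBijective j hb) = j := rfl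
      rw [← hco, hSperm, antisymmUnit_perm]
      field_simp
    · rw [hSzero j hb, antisymmUnit_not_bij j hb, mul_zero]
  have hEps : (∑ j : Fin d → Fin d, antisymmUnit d j ^ 2) = 1 / (Nat.factorial d : ℝ) := by
    rw [← Finset.sum_subset (Finset.subset_univ
        (Finset.univ.image (fun σ : Equiv.Perm (Fin d) => ⇑σ)))
        (fun j _ hj => by
          have hb : ¬ Function.Bijective j := by
            intro hb
            exact hj (Finset.mem_image.mpr ⟨Equiv.ofBijective j hb, Finset.mem_univ _, rfl⟩)
          rw [antisymmUnit_not_bij j hb]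
          norm_num)]
    rw [Finset.sum_image (fun σ _ τ _ h => Equiv.coe_fn_injective h)]
    have hterm : ∀ σ : Equiv.Perm (Fin d),
        antisymmUnit d ⇑σ ^ 2 = (1 / (Nat.factorial d : ℝ)) ^ 2 := by
      intro σ
      rw [antisymmUnit_perm, mul_pow]
      have : ((Equiv.Perm.sign σ : ℤ) : ℝ) ^ 2 = 1 := by rw [sq]; exact sign_sq σ
      rw [this, mul_one]
    rw [Finset.sum_congr rfl fun σ _ => hterm σ, Finset.sum_const, Finset.card_univ,
      Fintype.card_perm, Fintype.card_fin, nsmul_eq_mul]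
    field_simp
  have hSsum : (∑ j : Fin d → Fin d, S j ^ 2) = (Nat.factorial d : ℝ) * c ^ 2 := by
    calc (∑ j : Fin d → Fin d, S j ^ 2)
        = ∑ j : Fin d → Fin d,
            ((Nat.factorial d : ℝ) * c) ^ 2 * antisymmUnit d j ^ 2 := by
          exact Finset.sum_congr rfl fun j _ => by rw [hSval j]; ring
      _ = ((Nat.factorial d : ℝ) * c) ^ 2 *
            ∑ j : Fin d → Fin d, antisymmUnit d j ^ 2 := (Finset.mul_sum _ _ _).symm
      _ = (Nat.factorial d : ℝ) * c ^ 2 := by rw [hEps]; field_simp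
  refine ⟨?_, hEps, hSsum⟩
  rw [hSsum, hEps]
  rw [Real.sqrt_mul hfacpos.le, Real.sqrt_sq_eq_abs, one_div, Real.sqrt_inv]
  have hs : Real.sqrt (Nat.factorial d : ℝ) ≠ 0 :=
    ne_of_gt (Real.sqrt_pos.mpr hfacpos)
  field_simp
  rw [Real.sq_sqrt hfacpos.le, mul_comm]
end

section
/- Let u_1,u_2,u_3,u_4 ∈ ℝ^n be orthonormal, α ≠ 0, and A = antisymm(α u_1⊗u_2⊗u_3⊗u_4). Then for any permutation π of {1,2,3,4} with sign σ, the matrix A_(1,2) maps u_{π(1)}⊗u_{π(2)} − u_{π(2)}⊗u_{π(1)} to (σα/12)(u_{π(3)}⊗u_{π(4)} − u_{π(4)}⊗u_{π(3)}). Consequently A_(1,2) has eigenvalues α/12 and −α/12, each with a three-dimensional eigenspace, and all other eigenvalues are zero. -/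
def mat12 {n : ℕ} (A : (Fin 4 → Fin n) → ℝ) :
    Matrix (Fin n × Fin n) (Fin n × Fin n) ℝ :=
  fun p q => A ![p.1, p.2, q.1, q.2]

variable {n : ℕ}


lemma det4 (M : Matrix (Fin 4) (Fin 4) ℝ) : M.det =
    (M 0 0 * M 1 1 - M 0 1 * M 1 0) * (M 2 2 * M 3 3 - M 2 3 * M 3 2)
  - (M 0 0 * M 1 2 - M 0 2 * M 1 0) * (M 2 1 * M 3 3 - M 2 3 * M 3 1)
  + (M 0 0 * M 1 3 - M 0 3 * M 1 0) * (M 2 1 * M 3 2 - M 2 2 * M 3 1)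
  + (M 0 1 * M 1 2 - M 0 2 * M 1 1) * (M 2 0 * M 3 3 - M 2 3 * M 3 0)
  - (M 0 1 * M 1 3 - M 0 3 * M 1 1) * (M 2 0 * M 3 2 - M 2 2 * M 3 0)
  + (M 0 2 * M 1 3 - M 0 3 * M 1 2) * (M 2 0 * M 3 1 - M 2 1 * M 3 0) := by
  rw [Matrix.det_succ_row_zero]
  simp [Fin.sum_univ_succ, Matrix.det_fin_three, Matrix.submatrix,
    show (Fin.succ 2 : Fin 4) = 3 from rfl,
    show Fin.succAbove (2:Fin 4) (2:Fin 3) = 3 from rfl,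
    show Fin.succAbove (1:Fin 4) (2:Fin 3) = 3 from rfl,
    show Fin.castSucc (2:Fin 3) = (2:Fin 4) from rfl,
    show Fin.succAbove (3:Fin 4) (2:Fin 3) = 2 from rfl]
  ring

lemma hdetA (u : Fin 4 → Fin n → ℝ) (α : ℝ) (A : (Fin 4 → Fin n) → ℝ)
    (hA : ∀ i, A i = (1 / 24 : ℝ) * ∑ π : Equiv.Perm (Fin 4),
        ((Equiv.Perm.sign π : ℤ) : ℝ) * (α * ∏ m : Fin 4, u m (i (π m))))
    (a b c d : Fin n) :
    A ![a, b, c, d] = (α / 24) *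
      ( (u 0 a * u 1 b - u 1 a * u 0 b) * (u 2 c * u 3 d - u 3 c * u 2 d)
      - (u 0 a * u 2 b - u 2 a * u 0 b) * (u 1 c * u 3 d - u 3 c * u 1 d)
      + (u 0 a * u 3 b - u 3 a * u 0 b) * (u 1 c * u 2 d - u 2 c * u 1 d)
      + (u 1 a * u 2 b - u 2 a * u 1 b) * (u 0 c * u 3 d - u 3 c * u 0 d)
      - (u 1 a * u 3 b - u 3 a * u 1 b) * (u 0 c * u 2 d - u 2 c * u 0 d)
      + (u 2 a * u 3 b - u 3 a * u 2 b) * (u 0 c * u 1 d - u 1 c * u 0 d) ) := by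
  have h1 : A ![a, b, c, d] =
      (α / 24) * (Matrix.of fun r c' : Fin 4 => u c' (![a, b, c, d] r)).det := by
    rw [hA, Matrix.det_apply', Finset.mul_sum, Finset.mul_sum]
    refine Finset.sum_congr rfl fun π _ => ?_
    simp only [Matrix.of_apply]
    ring
  rw [h1, det4]
  simp only [Matrix.of_apply, Matrix.cons_val_zero, Matrix.cons_val_one, Matrix.head_cons,
    Matrix.cons_val_two, Matrix.tail_cons, Matrix.cons_val_three]



lemma prodsum (u : Fin 4 → Fin n → ℝ)
    (hu : ∀ p q : Fin 4, ∑ x : Fin n, u p x * u q x = if p = q then 1 else 0)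
    (k l a b : Fin 4) :
    ∑ p : Fin n × Fin n, u k p.1 * u l p.2 * (u a p.1 * u b p.2) =
      (if k = a then (1:ℝ) else 0) * (if l = b then 1 else 0) := by
  rw [Fintype.sum_prod_type]
  have h1 : ∀ x : Fin n, ∑ y : Fin n, u k x * u l y * (u a x * u b y)
      = (u k x * u a x) * ∑ y : Fin n, u l y * u b y := fun x => by
    rw [Finset.mul_sum]; exact Finset.sum_congr rfl fun y _ => by ring
  rw [Finset.sum_congr rfl fun x _ => h1 x]
  simp_rw [hu l b, ← Finset.sum_mul, hu k a]

lemma Tapply (u : Fin 4 → Fin n → ℝ) (α : ℝ) (A : (Fin 4 → Fin n) → ℝ)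
    (hdet : ∀ a b c d : Fin n, A ![a, b, c, d] = (α / 24) *
      ( (u 0 a * u 1 b - u 1 a * u 0 b) * (u 2 c * u 3 d - u 3 c * u 2 d)
      - (u 0 a * u 2 b - u 2 a * u 0 b) * (u 1 c * u 3 d - u 3 c * u 1 d)
      + (u 0 a * u 3 b - u 3 a * u 0 b) * (u 1 c * u 2 d - u 2 c * u 1 d)
      + (u 1 a * u 2 b - u 2 a * u 1 b) * (u 0 c * u 3 d - u 3 c * u 0 d)
      - (u 1 a * u 3 b - u 3 a * u 1 b) * (u 0 c * u 2 d - u 2 c * u 0 d)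
      + (u 2 a * u 3 b - u 3 a * u 2 b) * (u 0 c * u 1 d - u 1 c * u 0 d) ))
    (x : Fin n × Fin n → ℝ) :
    (mat12 A).mulVec x = fun q => (α / 24) *
      ( (u 0 q.1 * u 1 q.2 - u 1 q.1 * u 0 q.2) *
          ((∑ p : Fin n × Fin n, u 2 p.1 * u 3 p.2 * x p) - ∑ p : Fin n × Fin n, u 3 p.1 * u 2 p.2 * x p)
      - (u 0 q.1 * u 2 q.2 - u 2 q.1 * u 0 q.2) *
          ((∑ p : Fin n × Fin n, u 1 p.1 * u 3 p.2 * x p) - ∑ p : Fin n × Fin n, u 3 p.1 * u 1 p.2 * x p)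
      + (u 0 q.1 * u 3 q.2 - u 3 q.1 * u 0 q.2) *
          ((∑ p : Fin n × Fin n, u 1 p.1 * u 2 p.2 * x p) - ∑ p : Fin n × Fin n, u 2 p.1 * u 1 p.2 * x p)
      + (u 1 q.1 * u 2 q.2 - u 2 q.1 * u 1 q.2) *
          ((∑ p : Fin n × Fin n, u 0 p.1 * u 3 p.2 * x p) - ∑ p : Fin n × Fin n, u 3 p.1 * u 0 p.2 * x p)
      - (u 1 q.1 * u 3 q.2 - u 3 q.1 * u 1 q.2) *
          ((∑ p : Fin n × Fin n, u 0 p.1 * u 2 p.2 * x p) - ∑ p : Fin n × Fin n, u 2 p.1 * u 0 p.2 * x p)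
      + (u 2 q.1 * u 3 q.2 - u 3 q.1 * u 2 q.2) *
          ((∑ p : Fin n × Fin n, u 0 p.1 * u 1 p.2 * x p) - ∑ p : Fin n × Fin n, u 1 p.1 * u 0 p.2 * x p) ) := by
  funext q
  show ∑ p : Fin n × Fin n, A ![q.1, q.2, p.1, p.2] * x p = _
  simp only [hdet]
  simp only [← Finset.sum_sub_distrib]
  simp only [Finset.mul_sum]
  simp only [← Finset.sum_sub_distrib, ← Finset.sum_add_distrib]
  rw [Finset.mul_sum]
  refine Finset.sum_congr rfl fun p _ => by ring


lemma sdiff (u : Fin 4 → Fin n → ℝ)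
    (hu : ∀ p q : Fin 4, ∑ x : Fin n, u p x * u q x = if p = q then 1 else 0)
    (k l a b : Fin 4) :
    ∑ p : Fin n × Fin n, u k p.1 * u l p.2 * (u a p.1 * u b p.2 - u b p.1 * u a p.2) =
      (if k = a then (1:ℝ) else 0) * (if l = b then 1 else 0)
        - (if k = b then (1:ℝ) else 0) * (if l = a then 1 else 0) := by
  simp only [mul_sub, Finset.sum_sub_distrib, prodsum u hu]

lemma mulVec_pair (u : Fin 4 → Fin n → ℝ)
    (hu : ∀ p q : Fin 4, ∑ x : Fin n, u p x * u q x = if p = q then 1 else 0)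
    (α : ℝ) (A : (Fin 4 → Fin n) → ℝ)
    (hdet : ∀ a b c d : Fin n, A ![a, b, c, d] = (α / 24) *
      ( (u 0 a * u 1 b - u 1 a * u 0 b) * (u 2 c * u 3 d - u 3 c * u 2 d)
      - (u 0 a * u 2 b - u 2 a * u 0 b) * (u 1 c * u 3 d - u 3 c * u 1 d)
      + (u 0 a * u 3 b - u 3 a * u 0 b) * (u 1 c * u 2 d - u 2 c * u 1 d)
      + (u 1 a * u 2 b - u 2 a * u 1 b) * (u 0 c * u 3 d - u 3 c * u 0 d)
      - (u 1 a * u 3 b - u 3 a * u 1 b) * (u 0 c * u 2 d - u 2 c * u 0 d)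
      + (u 2 a * u 3 b - u 3 a * u 2 b) * (u 0 c * u 1 d - u 1 c * u 0 d) ))
    (a b : Fin 4) :
    (mat12 A).mulVec (fun p => u a p.1 * u b p.2 - u b p.1 * u a p.2) = fun q => (α / 12) *
      ( (u 0 q.1 * u 1 q.2 - u 1 q.1 * u 0 q.2) *
          ((if (2:Fin 4) = a then (1:ℝ) else 0) * (if (3:Fin 4) = b then 1 else 0) - (if (2:Fin 4) = b then 1 else 0) * (if (3:Fin 4) = a then 1 else 0))
      - (u 0 q.1 * u 2 q.2 - u 2 q.1 * u 0 q.2) *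
          ((if (1:Fin 4) = a then (1:ℝ) else 0) * (if (3:Fin 4) = b then 1 else 0) - (if (1:Fin 4) = b then 1 else 0) * (if (3:Fin 4) = a then 1 else 0))
      + (u 0 q.1 * u 3 q.2 - u 3 q.1 * u 0 q.2) *
          ((if (1:Fin 4) = a then (1:ℝ) else 0) * (if (2:Fin 4) = b then 1 else 0) - (if (1:Fin 4) = b then 1 else 0) * (if (2:Fin 4) = a then 1 else 0))
      + (u 1 q.1 * u 2 q.2 - u 2 q.1 * u 1 q.2) *
          ((if (0:Fin 4) = a then (1:ℝ) else 0) * (if (3:Fin 4) = b then 1 else 0) - (if (0:Fin 4) = b then 1 else 0) * (if (3:Fin 4) = a then 1 else 0))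
      - (u 1 q.1 * u 3 q.2 - u 3 q.1 * u 1 q.2) *
          ((if (0:Fin 4) = a then (1:ℝ) else 0) * (if (2:Fin 4) = b then 1 else 0) - (if (0:Fin 4) = b then 1 else 0) * (if (2:Fin 4) = a then 1 else 0))
      + (u 2 q.1 * u 3 q.2 - u 3 q.1 * u 2 q.2) *
          ((if (0:Fin 4) = a then (1:ℝ) else 0) * (if (1:Fin 4) = b then 1 else 0) - (if (0:Fin 4) = b then 1 else 0) * (if (1:Fin 4) = a then 1 else 0)) ) := by
  rw [Tapply u α A hdet]
  funext q
  simp only [sdiff u hu]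
  ring

lemma Fc01 : ∀ π : Equiv.Perm (Fin 4),
    ((if (2:Fin 4) = π 0 then (1:ℤ) else 0) * (if (3:Fin 4) = π 1 then 1 else 0) - (if (2:Fin 4) = π 1 then 1 else 0) * (if (3:Fin 4) = π 0 then 1 else 0))
    = (Equiv.Perm.sign π : ℤ) * ((if π 2 = 0 then (1:ℤ) else 0) * (if π 3 = 1 then 1 else 0) - (if π 3 = 0 then 1 else 0) * (if π 2 = 1 then 1 else 0)) := by decide

lemma Fc02 : ∀ π : Equiv.Perm (Fin 4),
    ((if (1:Fin 4) = π 0 then (1:ℤ) else 0) * (if (3:Fin 4) = π 1 then 1 else 0) - (if (1:Fin 4) = π 1 then 1 else 0) * (if (3:Fin 4) = π 0 then 1 else 0))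
    = -(Equiv.Perm.sign π : ℤ) * ((if π 2 = 0 then (1:ℤ) else 0) * (if π 3 = 2 then 1 else 0) - (if π 3 = 0 then 1 else 0) * (if π 2 = 2 then 1 else 0)) := by decide

lemma Fc03 : ∀ π : Equiv.Perm (Fin 4),
    ((if (1:Fin 4) = π 0 then (1:ℤ) else 0) * (if (2:Fin 4) = π 1 then 1 else 0) - (if (1:Fin 4) = π 1 then 1 else 0) * (if (2:Fin 4) = π 0 then 1 else 0))
    = (Equiv.Perm.sign π : ℤ) * ((if π 2 = 0 then (1:ℤ) else 0) * (if π 3 = 3 then 1 else 0) - (if π 3 = 0 then 1 else 0) * (if π 2 = 3 then 1 else 0)) := by decide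

lemma Fc12 : ∀ π : Equiv.Perm (Fin 4),
    ((if (0:Fin 4) = π 0 then (1:ℤ) else 0) * (if (3:Fin 4) = π 1 then 1 else 0) - (if (0:Fin 4) = π 1 then 1 else 0) * (if (3:Fin 4) = π 0 then 1 else 0))
    = (Equiv.Perm.sign π : ℤ) * ((if π 2 = 1 then (1:ℤ) else 0) * (if π 3 = 2 then 1 else 0) - (if π 3 = 1 then 1 else 0) * (if π 2 = 2 then 1 else 0)) := by decide

lemma Fc13 : ∀ π : Equiv.Perm (Fin 4),
    ((if (0:Fin 4) = π 0 then (1:ℤ) else 0) * (if (2:Fin 4) = π 1 then 1 else 0) - (if (0:Fin 4) = π 1 then 1 else 0) * (if (2:Fin 4) = π 0 then 1 else 0))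
    = -(Equiv.Perm.sign π : ℤ) * ((if π 2 = 1 then (1:ℤ) else 0) * (if π 3 = 3 then 1 else 0) - (if π 3 = 1 then 1 else 0) * (if π 2 = 3 then 1 else 0)) := by decide

lemma Fc23 : ∀ π : Equiv.Perm (Fin 4),
    ((if (0:Fin 4) = π 0 then (1:ℤ) else 0) * (if (1:Fin 4) = π 1 then 1 else 0) - (if (0:Fin 4) = π 1 then 1 else 0) * (if (1:Fin 4) = π 0 then 1 else 0))
    = (Equiv.Perm.sign π : ℤ) * ((if π 2 = 2 then (1:ℤ) else 0) * (if π 3 = 3 then 1 else 0) - (if π 3 = 2 then 1 else 0) * (if π 2 = 3 then 1 else 0)) := by decide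


lemma hexpand (c : Fin 4) (v : Fin 4 → ℝ) :
    v c = (if c = 0 then (1:ℝ) else 0) * v 0 + (if c = 1 then (1:ℝ) else 0) * v 1
        + (if c = 2 then (1:ℝ) else 0) * v 2 + (if c = 3 then (1:ℝ) else 0) * v 3 := by
  fin_cases c <;> simp

lemma part1 {n : ℕ} (u : Fin 4 → Fin n → ℝ)
    (hu : ∀ p q : Fin 4, ∑ x : Fin n, u p x * u q x = if p = q then 1 else 0)
    (α : ℝ) (A : (Fin 4 → Fin n) → ℝ)
    (hdet : ∀ a b c d : Fin n, A ![a, b, c, d] = (α / 24) *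
      ( (u 0 a * u 1 b - u 1 a * u 0 b) * (u 2 c * u 3 d - u 3 c * u 2 d)
      - (u 0 a * u 2 b - u 2 a * u 0 b) * (u 1 c * u 3 d - u 3 c * u 1 d)
      + (u 0 a * u 3 b - u 3 a * u 0 b) * (u 1 c * u 2 d - u 2 c * u 1 d)
      + (u 1 a * u 2 b - u 2 a * u 1 b) * (u 0 c * u 3 d - u 3 c * u 0 d)
      - (u 1 a * u 3 b - u 3 a * u 1 b) * (u 0 c * u 2 d - u 2 c * u 0 d)
      + (u 2 a * u 3 b - u 3 a * u 2 b) * (u 0 c * u 1 d - u 1 c * u 0 d) )) :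
    ∀ π : Equiv.Perm (Fin 4),
      (mat12 A).mulVec
          (fun p => u (π 0) p.1 * u (π 1) p.2 - u (π 1) p.1 * u (π 0) p.2) =
        (((Equiv.Perm.sign π : ℤ) : ℝ) * α / 12) •
          (fun q => u (π 2) q.1 * u (π 3) q.2 - u (π 3) q.1 * u (π 2) q.2) := by
  intro π
  rw [mulVec_pair u hu α A hdet (π 0) (π 1)]
  funext q
  simp only [Pi.smul_apply, smul_eq_mul]
  have e1 : u (π 2) q.1 = (if π 2 = 0 then (1:ℝ) else 0) * u 0 q.1 + (if π 2 = 1 then (1:ℝ) else 0) * u 1 q.1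
        + (if π 2 = 2 then (1:ℝ) else 0) * u 2 q.1 + (if π 2 = 3 then (1:ℝ) else 0) * u 3 q.1 :=
    hexpand (π 2) (fun i => u i q.1)
  have e2 : u (π 3) q.2 = (if π 3 = 0 then (1:ℝ) else 0) * u 0 q.2 + (if π 3 = 1 then (1:ℝ) else 0) * u 1 q.2
        + (if π 3 = 2 then (1:ℝ) else 0) * u 2 q.2 + (if π 3 = 3 then (1:ℝ) else 0) * u 3 q.2 :=
    hexpand (π 3) (fun i => u i q.2)
  have e3 : u (π 3) q.1 = (if π 3 = 0 then (1:ℝ) else 0) * u 0 q.1 + (if π 3 = 1 then (1:ℝ) else 0) * u 1 q.1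
        + (if π 3 = 2 then (1:ℝ) else 0) * u 2 q.1 + (if π 3 = 3 then (1:ℝ) else 0) * u 3 q.1 :=
    hexpand (π 3) (fun i => u i q.1)
  have e4 : u (π 2) q.2 = (if π 2 = 0 then (1:ℝ) else 0) * u 0 q.2 + (if π 2 = 1 then (1:ℝ) else 0) * u 1 q.2
        + (if π 2 = 2 then (1:ℝ) else 0) * u 2 q.2 + (if π 2 = 3 then (1:ℝ) else 0) * u 3 q.2 :=
    hexpand (π 2) (fun i => u i q.2)
  rw [e1, e2, e3, e4]
  have r01 : ((if (2:Fin 4) = π 0 then (1:ℝ) else 0) * (if (3:Fin 4) = π 1 then 1 else 0) - (if (2:Fin 4) = π 1 then 1 else 0) * (if (3:Fin 4) = π 0 then 1 else 0))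
      = ((Equiv.Perm.sign π : ℤ):ℝ) * ((if π 2 = 0 then (1:ℝ) else 0) * (if π 3 = 1 then 1 else 0) - (if π 3 = 0 then 1 else 0) * (if π 2 = 1 then 1 else 0)) := by exact_mod_cast Fc01 π
  have r02 : ((if (1:Fin 4) = π 0 then (1:ℝ) else 0) * (if (3:Fin 4) = π 1 then 1 else 0) - (if (1:Fin 4) = π 1 then 1 else 0) * (if (3:Fin 4) = π 0 then 1 else 0))
      = -((Equiv.Perm.sign π : ℤ):ℝ) * ((if π 2 = 0 then (1:ℝ) else 0) * (if π 3 = 2 then 1 else 0) - (if π 3 = 0 then 1 else 0) * (if π 2 = 2 then 1 else 0)) := by exact_mod_cast Fc02 π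
  have r03 : ((if (1:Fin 4) = π 0 then (1:ℝ) else 0) * (if (2:Fin 4) = π 1 then 1 else 0) - (if (1:Fin 4) = π 1 then 1 else 0) * (if (2:Fin 4) = π 0 then 1 else 0))
      = ((Equiv.Perm.sign π : ℤ):ℝ) * ((if π 2 = 0 then (1:ℝ) else 0) * (if π 3 = 3 then 1 else 0) - (if π 3 = 0 then 1 else 0) * (if π 2 = 3 then 1 else 0)) := by exact_mod_cast Fc03 π
  have r12 : ((if (0:Fin 4) = π 0 then (1:ℝ) else 0) * (if (3:Fin 4) = π 1 then 1 else 0) - (if (0:Fin 4) = π 1 then 1 else 0) * (if (3:Fin 4) = π 0 then 1 else 0))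
      = ((Equiv.Perm.sign π : ℤ):ℝ) * ((if π 2 = 1 then (1:ℝ) else 0) * (if π 3 = 2 then 1 else 0) - (if π 3 = 1 then 1 else 0) * (if π 2 = 2 then 1 else 0)) := by exact_mod_cast Fc12 π
  have r13 : ((if (0:Fin 4) = π 0 then (1:ℝ) else 0) * (if (2:Fin 4) = π 1 then 1 else 0) - (if (0:Fin 4) = π 1 then 1 else 0) * (if (2:Fin 4) = π 0 then 1 else 0))
      = -((Equiv.Perm.sign π : ℤ):ℝ) * ((if π 2 = 1 then (1:ℝ) else 0) * (if π 3 = 3 then 1 else 0) - (if π 3 = 1 then 1 else 0) * (if π 2 = 3 then 1 else 0)) := by exact_mod_cast Fc13 π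
  have r23 : ((if (0:Fin 4) = π 0 then (1:ℝ) else 0) * (if (1:Fin 4) = π 1 then 1 else 0) - (if (0:Fin 4) = π 1 then 1 else 0) * (if (1:Fin 4) = π 0 then 1 else 0))
      = ((Equiv.Perm.sign π : ℤ):ℝ) * ((if π 2 = 2 then (1:ℝ) else 0) * (if π 3 = 3 then 1 else 0) - (if π 3 = 2 then 1 else 0) * (if π 2 = 3 then 1 else 0)) := by exact_mod_cast Fc23 π
  linear_combination
    (α/12) * (u 0 q.1 * u 1 q.2 - u 1 q.1 * u 0 q.2) * r01 +
    -(α/12) * (u 0 q.1 * u 2 q.2 - u 2 q.1 * u 0 q.2) * r02 +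
    (α/12) * (u 0 q.1 * u 3 q.2 - u 3 q.1 * u 0 q.2) * r03 +
    (α/12) * (u 1 q.1 * u 2 q.2 - u 2 q.1 * u 1 q.2) * r12 +
    -(α/12) * (u 1 q.1 * u 3 q.2 - u 3 q.1 * u 1 q.2) * r13 +
    (α/12) * (u 2 q.1 * u 3 q.2 - u 3 q.1 * u 2 q.2) * r23


def pfn {n : ℕ} (u : Fin 4 → Fin n → ℝ) (a b : Fin 4) : Fin n × Fin n → ℝ :=
  fun p => u a p.1 * u b p.2 - u b p.1 * u a p.2

def bvec {n : ℕ} (u : Fin 4 → Fin n → ℝ) : Fin 6 → (Fin n × Fin n → ℝ) :=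
  ![pfn u 0 1 + pfn u 2 3, pfn u 0 3 + pfn u 1 2, pfn u 0 2 - pfn u 1 3,
    pfn u 0 1 - pfn u 2 3, pfn u 0 3 - pfn u 1 2, pfn u 0 2 + pfn u 1 3]

def epsv : Fin 6 → ℝ := ![1, 1, 1, -1, -1, -1]

lemma ddot (u : Fin 4 → Fin n → ℝ)
    (hu : ∀ p q : Fin 4, ∑ x : Fin n, u p x * u q x = if p = q then 1 else 0)
    (a b c e : Fin 4) :
    ∑ p : Fin n × Fin n, pfn u a b p * pfn u c e p =
      2 * ((if a = c then (1:ℝ) else 0) * (if b = e then 1 else 0)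
        - (if a = e then (1:ℝ) else 0) * (if b = c then 1 else 0)) := by
  simp only [pfn, sub_mul, mul_sub, Finset.sum_sub_distrib, prodsum u hu]
  ring

lemma gram (u : Fin 4 → Fin n → ℝ)
    (hu : ∀ p q : Fin 4, ∑ x : Fin n, u p x * u q x = if p = q then 1 else 0) :
    ∀ i j : Fin 6, ∑ p : Fin n × Fin n, bvec u i p * bvec u j p = if i = j then 4 else 0 := by
  intro i j
  have dd := ddot u hu
  have b0 : bvec u 0 = pfn u 0 1 + pfn u 2 3 := rfl
  have b1 : bvec u 1 = pfn u 0 3 + pfn u 1 2 := rfl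
  have b2 : bvec u 2 = pfn u 0 2 - pfn u 1 3 := rfl
  have b3 : bvec u 3 = pfn u 0 1 - pfn u 2 3 := rfl
  have b4 : bvec u 4 = pfn u 0 3 - pfn u 1 2 := rfl
  have b5 : bvec u 5 = pfn u 0 2 + pfn u 1 3 := rfl
  fin_cases i <;> fin_cases j <;>
    simp [b0, b1, b2, b3, b4, b5, add_mul, mul_add, sub_mul, mul_sub,
      Finset.sum_add_distrib, Finset.sum_sub_distrib, dd] <;> norm_num


lemma bvec_li (u : Fin 4 → Fin n → ℝ)
    (hu : ∀ p q : Fin 4, ∑ x : Fin n, u p x * u q x = if p = q then 1 else 0) :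
    LinearIndependent ℝ (bvec u) := by
  rw [Fintype.linearIndependent_iff]
  intro g hg0 j
  have hp : ∀ p : Fin n × Fin n, (∑ i : Fin 6, g i * bvec u i p) = 0 := by
    intro p
    have h := congrFun hg0 p
    simpa [Finset.sum_apply] using h
  have h4 : g j * 4 = 0 := by
    have step1 : ∑ i : Fin 6, g i * ∑ p : Fin n × Fin n, bvec u i p * bvec u j p = g j * 4 := by
      simp only [gram u hu, mul_ite, mul_zero]
      simp [Finset.sum_ite_eq']
    have step2 : ∑ i : Fin 6, g i * ∑ p : Fin n × Fin n, bvec u i p * bvec u j p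
        = ∑ p : Fin n × Fin n, (∑ i : Fin 6, g i * bvec u i p) * bvec u j p := by
      simp_rw [Finset.mul_sum]
      rw [Finset.sum_comm]
      simp_rw [Finset.sum_mul, mul_assoc]
    rw [← step1, step2]
    simp [hp]
  have := mul_eq_zero.1 h4
  simpa using this

lemma mulVec_bvec (u : Fin 4 → Fin n → ℝ)
    (hu : ∀ p q : Fin 4, ∑ x : Fin n, u p x * u q x = if p = q then 1 else 0)
    (α : ℝ) (A : (Fin 4 → Fin n) → ℝ)
    (hdet : ∀ a b c d : Fin n, A ![a, b, c, d] = (α / 24) *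
      ( (u 0 a * u 1 b - u 1 a * u 0 b) * (u 2 c * u 3 d - u 3 c * u 2 d)
      - (u 0 a * u 2 b - u 2 a * u 0 b) * (u 1 c * u 3 d - u 3 c * u 1 d)
      + (u 0 a * u 3 b - u 3 a * u 0 b) * (u 1 c * u 2 d - u 2 c * u 1 d)
      + (u 1 a * u 2 b - u 2 a * u 1 b) * (u 0 c * u 3 d - u 3 c * u 0 d)
      - (u 1 a * u 3 b - u 3 a * u 1 b) * (u 0 c * u 2 d - u 2 c * u 0 d)
      + (u 2 a * u 3 b - u 3 a * u 2 b) * (u 0 c * u 1 d - u 1 c * u 0 d) )) :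
    ∀ i : Fin 6, (mat12 A).mulVec (bvec u i) = (epsv i * (α / 12)) • bvec u i := by
  have h01 : (mat12 A).mulVec (pfn u 0 1) = (α / 12) • pfn u 2 3 := by
    rw [show pfn u 0 1 = (fun p => u 0 p.1 * u 1 p.2 - u 1 p.1 * u 0 p.2) from rfl,
      mulVec_pair u hu α A hdet 0 1]
    funext q; simp [pfn]
  have h23 : (mat12 A).mulVec (pfn u 2 3) = (α / 12) • pfn u 0 1 := by
    rw [show pfn u 2 3 = (fun p => u 2 p.1 * u 3 p.2 - u 3 p.1 * u 2 p.2) from rfl,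
      mulVec_pair u hu α A hdet 2 3]
    funext q; simp [pfn]
  have h02 : (mat12 A).mulVec (pfn u 0 2) = (-(α / 12)) • pfn u 1 3 := by
    rw [show pfn u 0 2 = (fun p => u 0 p.1 * u 2 p.2 - u 2 p.1 * u 0 p.2) from rfl,
      mulVec_pair u hu α A hdet 0 2]
    funext q; simp [pfn]; ring
  have h13 : (mat12 A).mulVec (pfn u 1 3) = (-(α / 12)) • pfn u 0 2 := by
    rw [show pfn u 1 3 = (fun p => u 1 p.1 * u 3 p.2 - u 3 p.1 * u 1 p.2) from rfl,
      mulVec_pair u hu α A hdet 1 3]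
    funext q; simp [pfn]; ring
  have h03 : (mat12 A).mulVec (pfn u 0 3) = (α / 12) • pfn u 1 2 := by
    rw [show pfn u 0 3 = (fun p => u 0 p.1 * u 3 p.2 - u 3 p.1 * u 0 p.2) from rfl,
      mulVec_pair u hu α A hdet 0 3]
    funext q; simp [pfn]
  have h12 : (mat12 A).mulVec (pfn u 1 2) = (α / 12) • pfn u 0 3 := by
    rw [show pfn u 1 2 = (fun p => u 1 p.1 * u 2 p.2 - u 2 p.1 * u 1 p.2) from rfl,
      mulVec_pair u hu α A hdet 1 2]
    funext q; simp [pfn]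
  intro i
  have b0 : bvec u 0 = pfn u 0 1 + pfn u 2 3 := rfl
  have b1 : bvec u 1 = pfn u 0 3 + pfn u 1 2 := rfl
  have b2 : bvec u 2 = pfn u 0 2 - pfn u 1 3 := rfl
  have b3 : bvec u 3 = pfn u 0 1 - pfn u 2 3 := rfl
  have b4 : bvec u 4 = pfn u 0 3 - pfn u 1 2 := rfl
  have b5 : bvec u 5 = pfn u 0 2 + pfn u 1 3 := rfl
  fin_cases i
  · show (mat12 A).mulVec (bvec u 0) = (epsv 0 * (α / 12)) • bvec u 0
    rw [show epsv 0 = 1 from rfl, b0, Matrix.mulVec_add, h01, h23]; module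
  · show (mat12 A).mulVec (bvec u 1) = (epsv 1 * (α / 12)) • bvec u 1
    rw [show epsv 1 = 1 from rfl, b1, Matrix.mulVec_add, h03, h12]; module
  · show (mat12 A).mulVec (bvec u 2) = (epsv 2 * (α / 12)) • bvec u 2
    rw [show epsv 2 = 1 from rfl, b2, Matrix.mulVec_sub, h02, h13]; module
  · show (mat12 A).mulVec (bvec u 3) = (epsv 3 * (α / 12)) • bvec u 3
    rw [show epsv 3 = -1 from rfl, b3, Matrix.mulVec_sub, h01, h23]; module
  · show (mat12 A).mulVec (bvec u 4) = (epsv 4 * (α / 12)) • bvec u 4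
    rw [show epsv 4 = -1 from rfl, b4, Matrix.mulVec_sub, h03, h12]; module
  · show (mat12 A).mulVec (bvec u 5) = (epsv 5 * (α / 12)) • bvec u 5
    rw [show epsv 5 = -1 from rfl, b5, Matrix.mulVec_add, h02, h13]; module


lemma range_mem (u : Fin 4 → Fin n → ℝ)
    (hu : ∀ p q : Fin 4, ∑ x : Fin n, u p x * u q x = if p = q then 1 else 0)
    (α : ℝ) (A : (Fin 4 → Fin n) → ℝ)
    (hdet : ∀ a b c d : Fin n, A ![a, b, c, d] = (α / 24) *
      ( (u 0 a * u 1 b - u 1 a * u 0 b) * (u 2 c * u 3 d - u 3 c * u 2 d)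
      - (u 0 a * u 2 b - u 2 a * u 0 b) * (u 1 c * u 3 d - u 3 c * u 1 d)
      + (u 0 a * u 3 b - u 3 a * u 0 b) * (u 1 c * u 2 d - u 2 c * u 1 d)
      + (u 1 a * u 2 b - u 2 a * u 1 b) * (u 0 c * u 3 d - u 3 c * u 0 d)
      - (u 1 a * u 3 b - u 3 a * u 1 b) * (u 0 c * u 2 d - u 2 c * u 0 d)
      + (u 2 a * u 3 b - u 3 a * u 2 b) * (u 0 c * u 1 d - u 1 c * u 0 d) ))
    (x : Fin n × Fin n → ℝ) :
    (mat12 A).mulVec x ∈ Submodule.span ℝ (Set.range (bvec u)) := by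
  set W := Submodule.span ℝ (Set.range (bvec u)) with hW
  have m01 : pfn u 0 1 ∈ W := by
    have h : pfn u 0 1 = (2⁻¹ : ℝ) • (bvec u 0 + bvec u 3) := by
      rw [show bvec u 0 = pfn u 0 1 + pfn u 2 3 from rfl,
        show bvec u 3 = pfn u 0 1 - pfn u 2 3 from rfl]; module
    rw [h]
    exact Submodule.smul_mem _ _ (add_mem (Submodule.subset_span ⟨0, rfl⟩)
      (Submodule.subset_span ⟨3, rfl⟩))
  have m23 : pfn u 2 3 ∈ W := by
    have h : pfn u 2 3 = (2⁻¹ : ℝ) • (bvec u 0 - bvec u 3) := by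
      rw [show bvec u 0 = pfn u 0 1 + pfn u 2 3 from rfl,
        show bvec u 3 = pfn u 0 1 - pfn u 2 3 from rfl]; module
    rw [h]
    exact Submodule.smul_mem _ _ (sub_mem (Submodule.subset_span ⟨0, rfl⟩)
      (Submodule.subset_span ⟨3, rfl⟩))
  have m03 : pfn u 0 3 ∈ W := by
    have h : pfn u 0 3 = (2⁻¹ : ℝ) • (bvec u 1 + bvec u 4) := by
      rw [show bvec u 1 = pfn u 0 3 + pfn u 1 2 from rfl,
        show bvec u 4 = pfn u 0 3 - pfn u 1 2 from rfl]; module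
    rw [h]
    exact Submodule.smul_mem _ _ (add_mem (Submodule.subset_span ⟨1, rfl⟩)
      (Submodule.subset_span ⟨4, rfl⟩))
  have m12 : pfn u 1 2 ∈ W := by
    have h : pfn u 1 2 = (2⁻¹ : ℝ) • (bvec u 1 - bvec u 4) := by
      rw [show bvec u 1 = pfn u 0 3 + pfn u 1 2 from rfl,
        show bvec u 4 = pfn u 0 3 - pfn u 1 2 from rfl]; module
    rw [h]
    exact Submodule.smul_mem _ _ (sub_mem (Submodule.subset_span ⟨1, rfl⟩)
      (Submodule.subset_span ⟨4, rfl⟩))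
  have m02 : pfn u 0 2 ∈ W := by
    have h : pfn u 0 2 = (2⁻¹ : ℝ) • (bvec u 2 + bvec u 5) := by
      rw [show bvec u 2 = pfn u 0 2 - pfn u 1 3 from rfl,
        show bvec u 5 = pfn u 0 2 + pfn u 1 3 from rfl]; module
    rw [h]
    exact Submodule.smul_mem _ _ (add_mem (Submodule.subset_span ⟨2, rfl⟩)
      (Submodule.subset_span ⟨5, rfl⟩))
  have m13 : pfn u 1 3 ∈ W := by
    have h : pfn u 1 3 = (2⁻¹ : ℝ) • (bvec u 5 - bvec u 2) := by
      rw [show bvec u 2 = pfn u 0 2 - pfn u 1 3 from rfl,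
        show bvec u 5 = pfn u 0 2 + pfn u 1 3 from rfl]; module
    rw [h]
    exact Submodule.smul_mem _ _ (sub_mem (Submodule.subset_span ⟨5, rfl⟩)
      (Submodule.subset_span ⟨2, rfl⟩))
  have hx : (mat12 A).mulVec x =
      ((α / 24) * ((∑ p : Fin n × Fin n, u 2 p.1 * u 3 p.2 * x p) - ∑ p : Fin n × Fin n, u 3 p.1 * u 2 p.2 * x p)) • pfn u 0 1
    + (-((α / 24) * ((∑ p : Fin n × Fin n, u 1 p.1 * u 3 p.2 * x p) - ∑ p : Fin n × Fin n, u 3 p.1 * u 1 p.2 * x p))) • pfn u 0 2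
    + ((α / 24) * ((∑ p : Fin n × Fin n, u 1 p.1 * u 2 p.2 * x p) - ∑ p : Fin n × Fin n, u 2 p.1 * u 1 p.2 * x p)) • pfn u 0 3
    + ((α / 24) * ((∑ p : Fin n × Fin n, u 0 p.1 * u 3 p.2 * x p) - ∑ p : Fin n × Fin n, u 3 p.1 * u 0 p.2 * x p)) • pfn u 1 2
    + (-((α / 24) * ((∑ p : Fin n × Fin n, u 0 p.1 * u 2 p.2 * x p) - ∑ p : Fin n × Fin n, u 2 p.1 * u 0 p.2 * x p))) • pfn u 1 3
    + ((α / 24) * ((∑ p : Fin n × Fin n, u 0 p.1 * u 1 p.2 * x p) - ∑ p : Fin n × Fin n, u 1 p.1 * u 0 p.2 * x p)) • pfn u 2 3 := by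
    rw [Tapply u α A hdet x]
    funext q
    simp only [Pi.add_apply, Pi.smul_apply, smul_eq_mul, pfn]
    ring
  rw [hx]
  exact add_mem (add_mem (add_mem (add_mem (add_mem
    (Submodule.smul_mem _ _ m01) (Submodule.smul_mem _ _ m02))
    (Submodule.smul_mem _ _ m03)) (Submodule.smul_mem _ _ m12))
    (Submodule.smul_mem _ _ m13)) (Submodule.smul_mem _ _ m23)

lemma keyrep (u : Fin 4 → Fin n → ℝ)
    (hu : ∀ p q : Fin 4, ∑ x : Fin n, u p x * u q x = if p = q then 1 else 0)
    (α : ℝ) (A : (Fin 4 → Fin n) → ℝ)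
    (hdet : ∀ a b c d : Fin n, A ![a, b, c, d] = (α / 24) *
      ( (u 0 a * u 1 b - u 1 a * u 0 b) * (u 2 c * u 3 d - u 3 c * u 2 d)
      - (u 0 a * u 2 b - u 2 a * u 0 b) * (u 1 c * u 3 d - u 3 c * u 1 d)
      + (u 0 a * u 3 b - u 3 a * u 0 b) * (u 1 c * u 2 d - u 2 c * u 1 d)
      + (u 1 a * u 2 b - u 2 a * u 1 b) * (u 0 c * u 3 d - u 3 c * u 0 d)
      - (u 1 a * u 3 b - u 3 a * u 1 b) * (u 0 c * u 2 d - u 2 c * u 0 d)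
      + (u 2 a * u 3 b - u 3 a * u 2 b) * (u 0 c * u 1 d - u 1 c * u 0 d) ))
    (μ : ℝ) (hμ : μ ≠ 0) (x : Fin n × Fin n → ℝ)
    (hx : (Matrix.toLin' (mat12 A)) x = μ • x) :
    ∃ c : Fin 6 → ℝ, (∀ i, c i * (epsv i * (α / 12) - μ) = 0) ∧
      ∑ i : Fin 6, c i • bvec u i = x := by
  have hTb : ∀ i, (Matrix.toLin' (mat12 A)) (bvec u i) = (epsv i * (α / 12)) • bvec u i := by
    intro i; rw [Matrix.toLin'_apply]; exact mulVec_bvec u hu α A hdet i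
  have hxW : x ∈ Submodule.span ℝ (Set.range (bvec u)) := by
    have h : x = μ⁻¹ • (Matrix.toLin' (mat12 A)) x := by
      rw [hx, smul_smul, inv_mul_cancel₀ hμ, one_smul]
    rw [h, Matrix.toLin'_apply]
    exact Submodule.smul_mem _ _ (range_mem u hu α A hdet x)
  obtain ⟨c, hc⟩ := (Submodule.mem_span_range_iff_exists_fun ℝ).1 hxW
  refine ⟨c, ?_, hc⟩
  have e1 : (Matrix.toLin' (mat12 A)) x = ∑ i : Fin 6, (c i * (epsv i * (α / 12))) • bvec u i := by
    rw [← hc, map_sum]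
    refine Finset.sum_congr rfl fun i _ => ?_
    rw [map_smul, hTb i, smul_smul]
  have e2 : μ • x = ∑ i : Fin 6, (c i * μ) • bvec u i := by
    rw [← hc, Finset.smul_sum]
    refine Finset.sum_congr rfl fun i _ => ?_
    rw [smul_smul, mul_comm]
  have h0 : ∑ i : Fin 6, (c i * (epsv i * (α / 12) - μ)) • bvec u i = 0 := by
    rw [Finset.sum_congr rfl fun (i : Fin 6) _ =>
      (by rw [mul_sub, sub_smul] :
        (c i * (epsv i * (α / 12) - μ)) • bvec u i
          = (c i * (epsv i * (α / 12))) • bvec u i - (c i * μ) • bvec u i),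
      Finset.sum_sub_distrib, ← e1, ← e2, hx, sub_self]
  exact fun i => Fintype.linearIndependent_iff.1 (bvec_li u hu) _ h0 i


/-- For `A = antisymm(α u₁⊗u₂⊗u₃⊗u₄)` with `u₁,…,u₄` orthonormal and `α ≠ 0`,
the matricization `A_(1,2)` maps `u_{π(1)}⊗u_{π(2)} − u_{π(2)}⊗u_{π(1)}` to
`(σα/12)(u_{π(3)}⊗u_{π(4)} − u_{π(4)}⊗u_{π(3)})` for every permutation `π` of
sign `σ`; consequently `A_(1,2)` has eigenvalues `α/12` and `−α/12`, each with a
three-dimensional eigenspace, and all its other eigenvalues are zero. -/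
theorem mat12_antisymm_rank_one_eigen {n : ℕ} (u : Fin 4 → Fin n → ℝ)
    (hu : ∀ p q : Fin 4, ∑ x : Fin n, u p x * u q x = if p = q then 1 else 0)
    (α : ℝ) (hα : α ≠ 0) (A : (Fin 4 → Fin n) → ℝ)
    (hA : ∀ i, A i = (1 / 24 : ℝ) * ∑ π : Equiv.Perm (Fin 4),
        ((Equiv.Perm.sign π : ℤ) : ℝ) * (α * ∏ m : Fin 4, u m (i (π m)))) :
    (∀ π : Equiv.Perm (Fin 4),
      (mat12 A).mulVec
          (fun p => u (π 0) p.1 * u (π 1) p.2 - u (π 1) p.1 * u (π 0) p.2) =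
        (((Equiv.Perm.sign π : ℤ) : ℝ) * α / 12) •
          (fun q => u (π 2) q.1 * u (π 3) q.2 - u (π 3) q.1 * u (π 2) q.2)) ∧
    Module.finrank ℝ
      (Module.End.eigenspace (Matrix.toLin' (mat12 A)) (α / 12)) = 3 ∧
    Module.finrank ℝ
      (Module.End.eigenspace (Matrix.toLin' (mat12 A)) (-α / 12)) = 3 ∧
    (∀ μ : ℝ, μ ≠ α / 12 → μ ≠ -α / 12 → μ ≠ 0 →
      Module.End.eigenspace (Matrix.toLin' (mat12 A)) μ = ⊥) := by
  have hdet := hdetA u α A hA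
  have hTb : ∀ i, (Matrix.toLin' (mat12 A)) (bvec u i) = (epsv i * (α / 12)) • bvec u i := by
    intro i; rw [Matrix.toLin'_apply]; exact mulVec_bvec u hu α A hdet i
  refine ⟨part1 u hu α A hdet, ?_, ?_, ?_⟩
  · -- eigenvalue α/12
    have hμ : (α / 12 : ℝ) ≠ 0 := div_ne_zero hα (by norm_num)
    have hsp : Module.End.eigenspace (Matrix.toLin' (mat12 A)) (α / 12)
        = Submodule.span ℝ (Set.range (bvec u ∘ (Fin.castLE (by norm_num) : Fin 3 → Fin 6))) := by
      apply le_antisymm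
      · intro x hx
        rw [Module.End.mem_eigenspace_iff] at hx
        obtain ⟨c, hc0, hc⟩ := keyrep u hu α A hdet (α / 12) hμ x hx
        have hne : (-1 : ℝ) * (α / 12) - α / 12 ≠ 0 := by
          intro h; exact hα (by linarith)
        have e3 : c 3 = 0 := by
          have h := hc0 3; rw [show epsv 3 = -1 from rfl] at h
          exact (mul_eq_zero.1 h).resolve_right hne
        have e4 : c 4 = 0 := by
          have h := hc0 4; rw [show epsv 4 = -1 from rfl] at h
          exact (mul_eq_zero.1 h).resolve_right hne
        have e5 : c 5 = 0 := by
          have h := hc0 5; rw [show epsv 5 = -1 from rfl] at h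
          exact (mul_eq_zero.1 h).resolve_right hne
        rw [← hc, Fin.sum_univ_six, e3, e4, e5]
        simp only [zero_smul, add_zero]
        exact add_mem (add_mem (Submodule.smul_mem _ _ (Submodule.subset_span ⟨0, rfl⟩))
          (Submodule.smul_mem _ _ (Submodule.subset_span ⟨1, rfl⟩)))
          (Submodule.smul_mem _ _ (Submodule.subset_span ⟨2, rfl⟩))
      · rw [Submodule.span_le]
        rintro _ ⟨i, rfl⟩
        rw [SetLike.mem_coe, Module.End.mem_eigenspace_iff]
        fin_cases i
        · show (Matrix.toLin' (mat12 A)) (bvec u 0) = (α / 12) • bvec u 0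
          rw [hTb 0, show epsv 0 = 1 from rfl, one_mul]
        · show (Matrix.toLin' (mat12 A)) (bvec u 1) = (α / 12) • bvec u 1
          rw [hTb 1, show epsv 1 = 1 from rfl, one_mul]
        · show (Matrix.toLin' (mat12 A)) (bvec u 2) = (α / 12) • bvec u 2
          rw [hTb 2, show epsv 2 = 1 from rfl, one_mul]
    rw [hsp, finrank_span_eq_card ((bvec_li u hu).comp _ (Fin.castLE_injective _))]
    simp
  · -- eigenvalue -α/12
    have hμ : (-α / 12 : ℝ) ≠ 0 := by
      simp only [ne_eq, div_eq_zero_iff, neg_eq_zero]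
      push_neg; exact ⟨hα, by norm_num⟩
    have hf2 : Function.Injective (fun i : Fin 3 => (⟨i.1 + 3, by omega⟩ : Fin 6)) := by
      intro a b h
      have : a.1 + 3 = b.1 + 3 := congrArg Fin.val h
      exact Fin.ext (by omega)
    have hsp : Module.End.eigenspace (Matrix.toLin' (mat12 A)) (-α / 12)
        = Submodule.span ℝ (Set.range (bvec u ∘ fun i : Fin 3 => (⟨i.1 + 3, by omega⟩ : Fin 6))) := by
      apply le_antisymm
      · intro x hx
        rw [Module.End.mem_eigenspace_iff] at hx
        obtain ⟨c, hc0, hc⟩ := keyrep u hu α A hdet (-α / 12) hμ x hx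
        have hne : (1 : ℝ) * (α / 12) - (-α / 12) ≠ 0 := by
          intro h; exact hα (by linarith)
        have e0 : c 0 = 0 := by
          have h := hc0 0; rw [show epsv 0 = 1 from rfl] at h
          exact (mul_eq_zero.1 h).resolve_right hne
        have e1 : c 1 = 0 := by
          have h := hc0 1; rw [show epsv 1 = 1 from rfl] at h
          exact (mul_eq_zero.1 h).resolve_right hne
        have e2 : c 2 = 0 := by
          have h := hc0 2; rw [show epsv 2 = 1 from rfl] at h
          exact (mul_eq_zero.1 h).resolve_right hne
        rw [← hc, Fin.sum_univ_six, e0, e1, e2]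
        simp only [zero_smul, zero_add]
        exact add_mem (add_mem (Submodule.smul_mem _ _ (Submodule.subset_span ⟨0, rfl⟩))
          (Submodule.smul_mem _ _ (Submodule.subset_span ⟨1, rfl⟩)))
          (Submodule.smul_mem _ _ (Submodule.subset_span ⟨2, rfl⟩))
      · rw [Submodule.span_le]
        rintro _ ⟨i, rfl⟩
        rw [SetLike.mem_coe, Module.End.mem_eigenspace_iff]
        fin_cases i
        · show (Matrix.toLin' (mat12 A)) (bvec u 3) = (-α / 12) • bvec u 3
          rw [hTb 3, show epsv 3 = -1 from rfl]; congr 1; ring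
        · show (Matrix.toLin' (mat12 A)) (bvec u 4) = (-α / 12) • bvec u 4
          rw [hTb 4, show epsv 4 = -1 from rfl]; congr 1; ring
        · show (Matrix.toLin' (mat12 A)) (bvec u 5) = (-α / 12) • bvec u 5
          rw [hTb 5, show epsv 5 = -1 from rfl]; congr 1; ring
    rw [hsp, finrank_span_eq_card ((bvec_li u hu).comp _ hf2)]
    simp
  · -- all other eigenvalues vanish
    intro μ h1 h2 h3
    rw [eq_bot_iff]
    intro x hx
    rw [Module.End.mem_eigenspace_iff] at hx
    obtain ⟨c, hc0, hc⟩ := keyrep u hu α A hdet μ h3 x hx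
    have hz : ∀ i, c i = 0 := by
      have hp : (1 : ℝ) * (α / 12) - μ ≠ 0 := fun h => h1 (by linarith)
      have hm : (-1 : ℝ) * (α / 12) - μ ≠ 0 := fun h => h2 (by linarith)
      intro i
      fin_cases i
      · have h := hc0 0; rw [show epsv 0 = 1 from rfl] at h
        exact (mul_eq_zero.1 h).resolve_right hp
      · have h := hc0 1; rw [show epsv 1 = 1 from rfl] at h
        exact (mul_eq_zero.1 h).resolve_right hp
      · have h := hc0 2; rw [show epsv 2 = 1 from rfl] at h
        exact (mul_eq_zero.1 h).resolve_right hp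
      · have h := hc0 3; rw [show epsv 3 = -1 from rfl] at h
        exact (mul_eq_zero.1 h).resolve_right hm
      · have h := hc0 4; rw [show epsv 4 = -1 from rfl] at h
        exact (mul_eq_zero.1 h).resolve_right hm
      · have h := hc0 5; rw [show epsv 5 = -1 from rfl] at h
        exact (mul_eq_zero.1 h).resolve_right hm
    rw [Submodule.mem_bot, ← hc]
    exact Finset.sum_eq_zero fun i _ => by rw [hz i, zero_smul]
end
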